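/- arXiv:1209.5554 — 4 statements merged into one kernel-verified Lean document; each statement's English description precedes it below -/
import Mathlib

section
/- Let h̃ be the subalgebra of ĥ spanned by all modes a_m with m ≠ 0 and K, with K acting as the identity. If M is an h̃-module that is bounded below and its space of ground states M_gs = {v ∈ M : a_m v = 0 for all m > 0, a ∈ h} is zero, then M = 0. -/
private lemma aux_sum_ge_length (l : List ℤ) (h : ∀ m ∈ l, 0 < m) :
    (l.length : ℤ) ≤ l.sum := by
  induction l with
  | nil => simp
  | cons p t ih =>
    simp only [List.length_cons, List.sum_cons]
    have h1 := h p (by simp)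
    have h2 := ih (fun q hq => h q (by simp [hq]))
    push_cast
    omega

/-- Let `h̃` be the subalgebra of the affinization `ĥ` spanned by the
nonzero modes `a_m` (`m ≠ 0`) and `K` (acting as the identity).  If `M` is an
`h̃`-module (mode action `ρ`) which is bounded below, and whose space of ground states
`M_gs = {v | a_m v = 0 for all m > 0}` is zero, then `M = 0`. -/
theorem bounded_below_no_ground_states_implies_zero
    {V M : Type} [AddCommGroup V] [Module ℂ V] [AddCommGroup M] [Module ℂ M]
    (ρ : V → ℤ → Module.End ℂ M)
    (hbdd : ∀ x : M, ∃ N : ℤ, ∀ l : List (V × ℤ), l ≠ [] →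
      N < (l.map Prod.snd).sum →
      l.foldr (fun pr y => ρ pr.1 pr.2 y) x = 0)
    (hgs : ∀ v : M, (∀ (a : V) (m : ℤ), 0 < m → ρ a m v = 0) → v = 0) :
    ∀ x : M, x = 0 := by
  intro x
  by_contra hx
  obtain ⟨N, hN⟩ := hbdd x
  have key : ∀ k : ℕ, ∃ l : List (V × ℤ), (∀ p ∈ l, 0 < p.2) ∧ l.length = k ∧
      l.foldr (fun pr y => ρ pr.1 pr.2 y) x ≠ 0 := by
    intro k
    induction k with
    | zero => exact ⟨[], by simp, rfl, hx⟩
    | succ n ih =>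
      obtain ⟨l, hpos, hlen, hne⟩ := ih
      set y := l.foldr (fun pr y => ρ pr.1 pr.2 y) x with hy
      have h' : ¬ ∀ (a : V) (m : ℤ), 0 < m → ρ a m y = 0 := fun h => hne (hgs y h)
      push_neg at h'
      obtain ⟨a, m, hm, hne'⟩ := h'
      refine ⟨(a, m) :: l, ?_, by simp [hlen], ?_⟩
      · intro p hp
        rcases List.mem_cons.mp hp with h | h
        · simpa [h] using hm
        · exact hpos p h
      · simpa [hy] using hne'
  obtain ⟨l, hpos, hlen, hne⟩ := key (max (N + 1) 1).toNat
  have hlen1 : 1 ≤ (l.length : ℤ) := by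
    rw [hlen]
    omega
  have hnil : l ≠ [] := by
    intro h
    simp [h] at hlen1
  have hsum : (l.length : ℤ) ≤ (l.map Prod.snd).sum := by
    have := aux_sum_ge_length (l.map Prod.snd) (by
      intro m hm
      obtain ⟨p, hp, rfl⟩ := List.mem_map.mp hm
      exact hpos p hp)
    simpa using this
  have hNlt : N < (l.map Prod.snd).sum := by
    have : (N + 1 : ℤ) ≤ l.length := by rw [hlen]; omega
    omega
  exact hne (hN l hnil hNlt)
end

section
/- Every h̃-module M that is bounded below is isomorphic, via the canonical map extending the inclusion of ground states, to the induced module J(M_gs); i.e., the embedding M_gs ↪ M lifts to a unique isomorphism J(M_gs) ≅ M of h̃-modules. -/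
namespace Stmt9

variable {V : Type} [AddCommGroup V] [Module ℂ V]

/-- The defining relations of an `h̃`-module with `K = id`:
`[a_m, b_n] = m (a,b) δ_{m+n,0}` as super-commutators, for nonzero modes. -/
def IsRep (g : ZMod 2 → Submodule ℂ V) (B : V →ₗ[ℂ] V →ₗ[ℂ] ℂ)
    {P : Type} [AddCommGroup P] [Module ℂ P]
    (ρ : V →ₗ[ℂ] ℤ → Module.End ℂ P) : Prop :=
  ∀ (pa pb : ZMod 2) (a b : V), a ∈ g pa → b ∈ g pb → ∀ m n : ℤ, m ≠ 0 → n ≠ 0 →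
    ρ a m * ρ b n - ((-1 : ℂ) ^ (pa.val * pb.val)) • (ρ b n * ρ a m) =
      ((Int.cast m : ℂ) * B a b * (if m + n = 0 then 1 else 0)) • (1 : Module.End ℂ P)

/-- A morphism of `h̃`-modules. -/
def Intertwines {P Q : Type} [AddCommGroup P] [Module ℂ P] [AddCommGroup Q] [Module ℂ Q]
    (ρP : V →ₗ[ℂ] ℤ → Module.End ℂ P) (ρQ : V →ₗ[ℂ] ℤ → Module.End ℂ Q)
    (F : P →ₗ[ℂ] Q) : Prop :=
  ∀ (a : V) (m : ℤ), m ≠ 0 → F ∘ₗ (ρP a m : P →ₗ[ℂ] P) = (ρQ a m : Q →ₗ[ℂ] Q) ∘ₗ F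

/-- The subspace of ground states: vectors annihilated by all positive modes. -/
def gs {P : Type} [AddCommGroup P] [Module ℂ P]
    (ρ : V →ₗ[ℂ] ℤ → Module.End ℂ P) : Submodule ℂ P where
  carrier := {x | ∀ (a : V) (m : ℤ), 0 < m → ρ a m x = 0}
  add_mem' := by
    intro x y hx hy a m hm
    rw [map_add, hx a m hm, hy a m hm, add_zero]
  zero_mem' := by intro a m hm; simp
  smul_mem' := by
    intro c x hx a m hm
    rw [map_smul, hx a m hm, smul_zero]

/-- Bounded below: every vector is annihilated by every sufficiently positive
monomial of modes. -/
def BoundedBelow {P : Type} [AddCommGroup P] [Module ℂ P]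
    (ρ : V →ₗ[ℂ] ℤ → Module.End ℂ P) : Prop :=
  ∀ x : P, ∃ N : ℤ, ∀ l : List (V × ℤ), l ≠ [] → N < (l.map Prod.snd).sum →
    l.foldr (fun pr y => ρ pr.1 pr.2 y) x = 0

/-- `(J, ρJ, ιJ)` is the `h̃`-module induced from the super-vector space `W`
(positive modes act as zero on `W`, `K` as the identity), phrased via the universal
property of induced modules. -/
def IsInducedFrom (g : ZMod 2 → Submodule ℂ V) (B : V →ₗ[ℂ] V →ₗ[ℂ] ℂ)
    {W J : Type} [AddCommGroup W] [Module ℂ W] [AddCommGroup J] [Module ℂ J]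
    (ρJ : V →ₗ[ℂ] ℤ → Module.End ℂ J) (ιJ : W →ₗ[ℂ] J) : Prop :=
  IsRep g B ρJ ∧ (∀ w : W, ιJ w ∈ gs ρJ) ∧
  ∀ (P : Type) [AddCommGroup P] [Module ℂ P] (ρP : V →ₗ[ℂ] ℤ → Module.End ℂ P),
    IsRep g B ρP → ∀ f : W →ₗ[ℂ] P, (∀ w : W, f w ∈ gs ρP) →
      ∃! F : J →ₗ[ℂ] P, Intertwines ρJ ρP F ∧ F ∘ₗ ιJ = f


set_option linter.unusedSectionVars false
set_option maxHeartbeats 1000000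
set_option linter.unreachableTactic false
set_option linter.unnecessarySeqFocus false
set_option linter.unusedTactic false
set_option linter.unusedVariables false

section Aux
variable {V : Type} [AddCommGroup V] [Module ℂ V]
variable {P : Type} [AddCommGroup P] [Module ℂ P]

lemma rep_comm {g : ZMod 2 → Submodule ℂ V} {B : V →ₗ[ℂ] V →ₗ[ℂ] ℂ}
    {ρ : V →ₗ[ℂ] ℤ → Module.End ℂ P} (hRep : IsRep g B ρ)
    {pa pb : ZMod 2} {a b : V} (ha : a ∈ g pa) (hb : b ∈ g pb)
    {m n : ℤ} (hm : m ≠ 0) (hn : n ≠ 0) (v : P) :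
    ρ a m (ρ b n v) = ((-1 : ℂ) ^ (pa.val * pb.val)) • ρ b n (ρ a m v)
      + ((m : ℂ) * B a b * (if m + n = 0 then 1 else 0)) • v := by
  have h := hRep pa pb a b ha hb m n hm hn
  have h2 := congrArg (fun (T : Module.End ℂ P) => T v) h
  simp only [LinearMap.sub_apply, LinearMap.smul_apply, Module.End.mul_apply,
    Module.End.one_apply] at h2
  linear_combination (norm := module) h2

end Aux

section DDef
variable {V : Type} [AddCommGroup V] [Module ℂ V]
variable {ι : Type} [Fintype ι] [DecidableEq ι]
variable {P : Type} [AddCommGroup P] [Module ℂ P]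

/-- truncated degree operator -/
noncomputable def Dtr (ρ : V →ₗ[ℂ] ℤ → Module.End ℂ P) (α β : Module.Basis ι ℂ V)
    (d : ℤ) (v : P) : P :=
  ∑ m ∈ Finset.Icc (1:ℤ) d, ∑ i, (m:ℂ)⁻¹ • ρ (β i) (-m) (ρ (α i) m v)

def good (ρ : V →ₗ[ℂ] ℤ → Module.End ℂ P) (d : ℤ) (v : P) : Prop :=
  ∀ (a : V) (m : ℤ), d < m → ρ a m v = 0

def SMB (ρ : V →ₗ[ℂ] ℤ → Module.End ℂ P) : Prop := ∀ v : P, ∃ d, good ρ d v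

lemma good_mono {ρ : V →ₗ[ℂ] ℤ → Module.End ℂ P} {d d' : ℤ} {v : P}
    (h : good ρ d v) (hd : d ≤ d') : good ρ d' v :=
  fun a m hm => h a m (lt_of_le_of_lt hd hm)

lemma Dtr_stab {ρ : V →ₗ[ℂ] ℤ → Module.End ℂ P} {α β : Module.Basis ι ℂ V} {d d' : ℤ} {v : P}
    (hg : good ρ d v) (hd : d ≤ d') : Dtr ρ α β d' v = Dtr ρ α β d v := by
  unfold Dtr
  refine (Finset.sum_subset (Finset.Icc_subset_Icc_right hd) ?_).symm
  intro m hm hm'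
  simp only [Finset.mem_Icc] at hm hm'
  have : d < m := by omega
  apply Finset.sum_eq_zero
  intro i _
  rw [hg (α i) m this, map_zero, smul_zero]

noncomputable def DD (ρ : V →ₗ[ℂ] ℤ → Module.End ℂ P) (α β : Module.Basis ι ℂ V)
    (hS : SMB ρ) (v : P) : P := Dtr ρ α β (hS v).choose v

lemma DD_eq {ρ : V →ₗ[ℂ] ℤ → Module.End ℂ P} {α β : Module.Basis ι ℂ V} (hS : SMB ρ)
    {d : ℤ} {v : P} (hg : good ρ d v) : DD ρ α β hS v = Dtr ρ α β d v := by
  unfold DD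
  rw [← Dtr_stab (hS v).choose_spec (le_max_left _ d), ← Dtr_stab hg (le_max_right (hS v).choose d)]

lemma Dtr_add {ρ : V →ₗ[ℂ] ℤ → Module.End ℂ P} {α β : Module.Basis ι ℂ V} {d : ℤ} (v w : P) :
    Dtr ρ α β d (v + w) = Dtr ρ α β d v + Dtr ρ α β d w := by
  unfold Dtr
  rw [← Finset.sum_add_distrib]
  refine Finset.sum_congr rfl fun m _ => ?_
  rw [← Finset.sum_add_distrib]
  refine Finset.sum_congr rfl fun i _ => ?_
  rw [map_add, map_add, smul_add]

lemma Dtr_smul {ρ : V →ₗ[ℂ] ℤ → Module.End ℂ P} {α β : Module.Basis ι ℂ V} {d : ℤ} (c : ℂ) (v : P) :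
    Dtr ρ α β d (c • v) = c • Dtr ρ α β d v := by
  unfold Dtr
  rw [Finset.smul_sum]
  refine Finset.sum_congr rfl fun m _ => ?_
  rw [Finset.smul_sum]
  refine Finset.sum_congr rfl fun i _ => ?_
  rw [map_smul, map_smul, smul_comm]

lemma Dtr_zero {ρ : V →ₗ[ℂ] ℤ → Module.End ℂ P} {α β : Module.Basis ι ℂ V} {d : ℤ} :
    Dtr ρ α β d (0 : P) = 0 := by
  unfold Dtr
  refine Finset.sum_eq_zero fun m _ => Finset.sum_eq_zero fun i _ => ?_
  rw [map_zero, map_zero, smul_zero]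

lemma good_add {ρ : V →ₗ[ℂ] ℤ → Module.End ℂ P} {d : ℤ} {v w : P}
    (hv : good ρ d v) (hw : good ρ d w) : good ρ d (v + w) := by
  intro a m hm; rw [map_add, hv a m hm, hw a m hm, add_zero]

lemma good_smul {ρ : V →ₗ[ℂ] ℤ → Module.End ℂ P} {d : ℤ} {v : P} (c : ℂ)
    (hv : good ρ d v) : good ρ d (c • v) := by
  intro a m hm; rw [map_smul, hv a m hm, smul_zero]

lemma DD_add {ρ : V →ₗ[ℂ] ℤ → Module.End ℂ P} {α β : Module.Basis ι ℂ V} (hS : SMB ρ) (v w : P) :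
    DD ρ α β hS (v + w) = DD ρ α β hS v + DD ρ α β hS w := by
  obtain ⟨d1, h1⟩ := hS v
  obtain ⟨d2, h2⟩ := hS w
  set d := max d1 d2
  have h1' := good_mono h1 (le_max_left d1 d2)
  have h2' := good_mono h2 (le_max_right d1 d2)
  rw [DD_eq hS h1', DD_eq hS h2', DD_eq hS (good_add h1' h2'), Dtr_add]

lemma DD_smul {ρ : V →ₗ[ℂ] ℤ → Module.End ℂ P} {α β : Module.Basis ι ℂ V} (hS : SMB ρ)
    (c : ℂ) (v : P) : DD ρ α β hS (c • v) = c • DD ρ α β hS v := by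
  obtain ⟨d1, h1⟩ := hS v
  rw [DD_eq hS h1, DD_eq hS (good_smul c h1), Dtr_smul]

lemma DD_zero {ρ : V →ₗ[ℂ] ℤ → Module.End ℂ P} {α β : Module.Basis ι ℂ V} (hS : SMB ρ) :
    DD ρ α β hS (0 : P) = 0 := by
  unfold DD; exact Dtr_zero

lemma gs_DD {ρ : V →ₗ[ℂ] ℤ → Module.End ℂ P} {α β : Module.Basis ι ℂ V} (hS : SMB ρ)
    {v : P} (hv : v ∈ gs ρ) : DD ρ α β hS v = 0 := by
  unfold DD Dtr
  refine Finset.sum_eq_zero fun m hm => Finset.sum_eq_zero fun i _ => ?_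
  simp only [Finset.mem_Icc] at hm
  rw [hv (α i) m (by omega), map_zero, smul_zero]

end DDef
section Comm
variable {V : Type} [AddCommGroup V] [Module ℂ V]
variable {ι : Type} [Fintype ι] [DecidableEq ι]
variable {P : Type} [AddCommGroup P] [Module ℂ P]
variable {g : ZMod 2 → Submodule ℂ V} {B : V →ₗ[ℂ] V →ₗ[ℂ] ℂ}
variable {α β : Module.Basis ι ℂ V} {p : ι → ZMod 2}
variable {ρ : V →ₗ[ℂ] ℤ → Module.End ℂ P}

lemma eps_sq (i j : ι) :
    ((-1:ℂ) ^ ((p i).val * (p j).val)) * ((-1:ℂ) ^ ((p i).val * (p j).val)) = 1 := by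
  rw [← pow_add, ← two_mul, pow_mul]
  norm_num

lemma rho_expand (ρ : V →ₗ[ℂ] ℤ → Module.End ℂ P) (α : Module.Basis ι ℂ V)
    (a : V) (n : ℤ) (v : P) :
    ρ a n v = ∑ i, (α.repr a i) • ρ (α i) n v := by
  conv_lhs => rw [← Module.Basis.sum_repr α a]
  rw [map_sum, Finset.sum_apply, LinearMap.sum_apply]
  refine Finset.sum_congr rfl fun i _ => ?_
  rw [map_smul, Pi.smul_apply, LinearMap.smul_apply]

lemma DD_beta (hRep : IsRep g B ρ) (hS : SMB ρ)
    (hα : ∀ i, (α i : V) ∈ g (p i)) (hβ : ∀ i, (β i : V) ∈ g (p i))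
    (hdual : ∀ i j, B (α i) (β j) = if i = j then 1 else 0)
    (j : ι) {n : ℤ} (hn : n < 0) (v : P) :
    DD ρ α β hS (ρ (β j) n v) = ρ (β j) n (DD ρ α β hS v) + ρ (β j) n v := by
  obtain ⟨d1, h1⟩ := hS v
  obtain ⟨d2, h2⟩ := hS (ρ (β j) n v)
  set d := max (max d1 d2) (-n) with hd
  have hg1 : good ρ d v := good_mono h1 (by omega)
  have hg2 : good ρ d (ρ (β j) n v) := good_mono h2 (by omega)
  rw [DD_eq hS hg2, DD_eq hS hg1]
  unfold Dtr
  have key : ∀ m ∈ Finset.Icc (1:ℤ) d, ∀ i : ι,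
      (m:ℂ)⁻¹ • ρ (β i) (-m) (ρ (α i) m (ρ (β j) n v))
      = ρ (β j) n ((m:ℂ)⁻¹ • ρ (β i) (-m) (ρ (α i) m v))
        + (if i = j then (if m = -n then ρ (β j) n v else 0) else 0) := by
    intro m hm i
    simp only [Finset.mem_Icc] at hm
    have hm0 : m ≠ 0 := by omega
    have hn0 : n ≠ 0 := by omega
    rw [rep_comm hRep (hα i) (hβ j) hm0 hn0 v, map_add, map_smul, map_smul,
      rep_comm hRep (hβ i) (hβ j) (by omega : -m ≠ 0) hn0 (ρ (α i) m v),
      if_neg (by omega : ¬(-m + n = 0)), hdual i j, mul_zero, zero_smul, add_zero,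
      smul_smul, eps_sq, one_smul, smul_add, ← map_smul (ρ (β j) n), smul_smul]
    congr 1
    by_cases hij : i = j
    · subst hij
      by_cases hmn : m = -n
      · have hmn' : -m = n := by omega
        rw [hmn', if_pos rfl, if_pos rfl, if_pos (by omega : m + n = 0), mul_one, mul_one,
          inv_mul_cancel₀ (Int.cast_ne_zero.mpr hm0), one_smul]
        exact (if_pos hmn).symm
      · rw [if_pos rfl, if_neg hmn, if_neg (by omega : ¬(m + n = 0)), mul_zero, mul_zero,
          zero_smul]
        simp
    · rw [if_neg hij, mul_zero, zero_mul, mul_zero, zero_smul]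
      simp [hij]
  rw [Finset.sum_congr rfl (fun m hm => Finset.sum_congr rfl (fun i _ => key m hm i))]
  simp only [Finset.sum_add_distrib]
  congr 1
  · rw [map_sum]
    refine Finset.sum_congr rfl fun m _ => ?_
    rw [map_sum]
  · rw [Finset.sum_congr rfl (fun m _ => Finset.sum_ite_eq' Finset.univ j
      (fun _ => if m = -n then ρ (β j) n v else 0))]
    simp only [Finset.mem_univ, if_true]
    rw [Finset.sum_ite_eq' (Finset.Icc (1:ℤ) d) (-n) (fun _ => ρ (β j) n v)]
    rw [if_pos (by simp only [Finset.mem_Icc]; omega)]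

end Comm
section Comm2
variable {V : Type} [AddCommGroup V] [Module ℂ V]
variable {ι : Type} [Fintype ι] [DecidableEq ι]
variable {P : Type} [AddCommGroup P] [Module ℂ P]
variable {g : ZMod 2 → Submodule ℂ V} {B : V →ₗ[ℂ] V →ₗ[ℂ] ℂ}
variable {α β : Module.Basis ι ℂ V} {p : ι → ZMod 2}
variable {ρ : V →ₗ[ℂ] ℤ → Module.End ℂ P}

lemma DD_alpha (hRep : IsRep g B ρ) (hS : SMB ρ)
    (hα : ∀ i, (α i : V) ∈ g (p i)) (hβ : ∀ i, (β i : V) ∈ g (p i))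
    (hdual : ∀ i j, B (α i) (β j) = if i = j then 1 else 0)
    (hsym : ∀ (i j : ZMod 2) (x y : V), x ∈ g i → y ∈ g j →
      B x y = (-1 : ℂ) ^ (i.val * j.val) * B y x)
    (j : ι) {n : ℤ} (hn : 0 < n) (v : P) :
    DD ρ α β hS (ρ (α j) n v) = ρ (α j) n (DD ρ α β hS v) - ρ (α j) n v := by
  obtain ⟨d1, h1⟩ := hS v
  obtain ⟨d2, h2⟩ := hS (ρ (α j) n v)
  set d := max (max d1 d2) n with hd
  have hg1 : good ρ d v := good_mono h1 (by omega)
  have hg2 : good ρ d (ρ (α j) n v) := good_mono h2 (by omega)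
  rw [DD_eq hS hg2, DD_eq hS hg1]
  unfold Dtr
  have key : ∀ m ∈ Finset.Icc (1:ℤ) d, ∀ i : ι,
      (m:ℂ)⁻¹ • ρ (β i) (-m) (ρ (α i) m (ρ (α j) n v))
      = (m:ℂ)⁻¹ • ρ (α j) n (ρ (β i) (-m) (ρ (α i) m v))
        + (if i = j then (if m = n then -(ρ (α j) n v) else 0) else 0) := by
    intro m hm i
    simp only [Finset.mem_Icc] at hm
    have hm0 : m ≠ 0 := by omega
    have hn0 : n ≠ 0 := by omega
    rw [rep_comm hRep (hα i) (hα j) hm0 hn0 v,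
      if_neg (by omega : ¬(m + n = 0)), mul_zero, zero_smul, add_zero,
      map_smul,
      rep_comm hRep (hβ i) (hα j) (by omega : -m ≠ 0) hn0 (ρ (α i) m v),
      hsym (p i) (p j) (β i) (α j) (hβ i) (hα j), hdual j i]
    have hmC : (m:ℂ) ≠ 0 := Int.cast_ne_zero.mpr hm0
    have hnC : (n:ℂ) ≠ 0 := Int.cast_ne_zero.mpr hn0
    by_cases hij : i = j
    · by_cases hmn : m = n
      · have h3 : -m + n = 0 := by omega
        simp only [hij, hmn, h3, if_true, eq_self_iff_true, reduceIte]
        rw [if_pos (by omega : -n + n = 0)]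
        generalize hE : ((-1:ℂ)) ^ ((p j).val * (p j).val) = E
        have e' : E * E = 1 := by rw [← hE]; exact eps_sq (p := p) j j
        match_scalars <;> push_cast <;> field_simp <;>
          first
          | linear_combination e'
          | linear_combination -e'
          | linear_combination (n:ℂ) * e'
          | linear_combination (-(n:ℂ)) * e'
          | ring
      · have h3 : ¬(-m + n = 0) := by omega
        simp only [hij, hmn, h3, if_true, if_false, eq_self_iff_true, reduceIte]
        generalize hE : ((-1:ℂ)) ^ ((p j).val * (p j).val) = E
        have e' : E * E = 1 := by rw [← hE]; exact eps_sq (p := p) j j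
        match_scalars <;> push_cast <;> field_simp <;>
          first
          | linear_combination e'
          | linear_combination -e'
          | linear_combination (m:ℂ) * e'
          | linear_combination (-(m:ℂ)) * e'
          | ring
    · have h4 : ¬(j = i) := fun h => hij h.symm
      simp only [hij, h4, if_false, reduceIte]
      generalize hE : ((-1:ℂ)) ^ ((p i).val * (p j).val) = E
      have e' : E * E = 1 := by rw [← hE]; exact eps_sq (p := p) i j
      match_scalars <;> push_cast <;> field_simp <;>
        first
        | linear_combination e'
        | linear_combination -e'
        | linear_combination (m:ℂ) * e'
        | linear_combination (-(m:ℂ)) * e'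
        | ring
  rw [Finset.sum_congr rfl (fun m hm => Finset.sum_congr rfl (fun i _ => key m hm i))]
  simp only [Finset.sum_add_distrib]
  rw [sub_eq_add_neg]
  congr 1
  · rw [map_sum]
    refine Finset.sum_congr rfl fun m _ => ?_
    rw [map_sum]
    refine Finset.sum_congr rfl fun i _ => ?_
    rw [map_smul]
  · rw [Finset.sum_congr rfl (fun m _ => Finset.sum_ite_eq' Finset.univ j
      (fun _ => if m = n then -(ρ (α j) n v) else 0))]
    simp only [Finset.mem_univ, if_true]
    rw [Finset.sum_ite_eq' (Finset.Icc (1:ℤ) d) n (fun _ => -(ρ (α j) n v))]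
    rw [if_pos (by simp only [Finset.mem_Icc]; omega)]

end Comm2
section Qmach
variable {P : Type} [AddCommGroup P] [Module ℂ P]

def Qit (Df : P → P) : List ℂ → P → P
  | [], v => v
  | c :: cs, v => Df (Qit Df cs v) - c • Qit Df cs v

variable {Df : P → P}
  (hadd : ∀ v w, Df (v + w) = Df v + Df w)
  (hsmul : ∀ (c : ℂ) (v : P), Df (c • v) = c • Df v)

include hsmul in
lemma Df_zero : Df 0 = 0 := by
  have := hsmul 0 0; simpa using this

include hadd hsmul in
lemma Df_sub (v w : P) : Df (v - w) = Df v - Df w := by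
  have h := hadd v (-w)
  have h2 := hsmul (-1) w
  simp only [neg_one_smul] at h2
  rw [sub_eq_add_neg, h, h2, sub_eq_add_neg]

lemma Qit_append (cs ds : List ℂ) (v : P) :
    Qit Df (cs ++ ds) v = Qit Df cs (Qit Df ds v) := by
  induction cs with
  | nil => rfl
  | cons c cs ih => simp only [List.cons_append, Qit, List.append_eq, ih]

include hsmul in
lemma Qit_zero (cs : List ℂ) : Qit Df cs (0 : P) = 0 := by
  induction cs with
  | nil => rfl
  | cons c cs ih => simp only [Qit, ih, Df_zero hsmul, smul_zero, sub_zero]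

include hadd hsmul in
lemma Qit_add (cs : List ℂ) (v w : P) :
    Qit Df cs (v + w) = Qit Df cs v + Qit Df cs w := by
  induction cs with
  | nil => rfl
  | cons c cs ih => simp only [Qit, ih, hadd, smul_add]; module

include hadd hsmul in
lemma Qit_smul (cs : List ℂ) (c : ℂ) (v : P) :
    Qit Df cs (c • v) = c • Qit Df cs v := by
  induction cs with
  | nil => rfl
  | cons c' cs ih => simp only [Qit, ih, hsmul, smul_sub, smul_comm c c']

include hadd hsmul in
lemma Qit_comm_single (cs : List ℂ) (c : ℂ) (v : P) :
    Qit Df cs (Df v - c • v) = Df (Qit Df cs v) - c • Qit Df cs v := by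
  induction cs with
  | nil => rfl
  | cons c' cs ih =>
    simp only [Qit, ih, Df_sub hadd hsmul, hsmul]
    module

include hadd hsmul in
lemma Qit_swap (cs ds : List ℂ) (v : P) :
    Qit Df (cs ++ ds) v = Qit Df (ds ++ cs) v := by
  induction cs with
  | nil => simp [Qit_append]
  | cons c cs ih =>
    calc Qit Df ((c :: cs) ++ ds) v = Df (Qit Df (cs ++ ds) v) - c • Qit Df (cs ++ ds) v := rfl
    _ = Df (Qit Df (ds ++ cs) v) - c • Qit Df (ds ++ cs) v := by rw [ih]
    _ = Df (Qit Df ds (Qit Df cs v)) - c • Qit Df ds (Qit Df cs v) := by rw [Qit_append]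
    _ = Qit Df ds (Df (Qit Df cs v) - c • Qit Df cs v) := (Qit_comm_single hadd hsmul _ _ _).symm
    _ = Qit Df ds (Qit Df (c :: cs) v) := rfl
    _ = Qit Df (ds ++ (c :: cs)) v := (Qit_append _ _ _).symm

include hadd hsmul in
lemma Qit_eigen {μ : ℂ} {v : P} (hv : Df v = μ • v) (cs : List ℂ) :
    Qit Df cs v = ((cs.map (fun c => μ - c)).prod) • v := by
  induction cs with
  | nil => simp [Qit]
  | cons c cs ih =>
    simp only [Qit, ih, hsmul, hv, List.map_cons, List.prod_cons, smul_smul]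
    match_scalars
    ring

include hadd hsmul in
lemma Qit_mem (U : Submodule ℂ P) (hU : ∀ u ∈ U, Df u ∈ U) {x : P} (hx : Df x ∈ U)
    (cs : List ℂ) :
    ∃ u ∈ U, Qit Df cs x = ((cs.map (fun c => -c)).prod) • x + u := by
  induction cs with
  | nil => exact ⟨0, U.zero_mem, by simp [Qit]⟩
  | cons c cs ih =>
    obtain ⟨u, hu, he⟩ := ih
    refine ⟨((cs.map (fun c => -c)).prod) • Df x + Df u - c • u,
      U.sub_mem (U.add_mem (U.smul_mem _ hx) (hU u hu)) (U.smul_mem _ hu), ?_⟩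
    show Df (Qit Df cs x) - c • Qit Df cs x = _
    rw [he, hadd, hsmul, List.map_cons, List.prod_cons]
    module

def tlst (K : ℕ) : List ℂ := (List.range K).map (fun k => ((k : ℕ) : ℂ) + 1)
def nlst (K : ℕ) : List ℂ := (0 : ℂ) :: tlst K

lemma nlst_eq (K : ℕ) : nlst K = (0 : ℂ) :: tlst K := rfl

lemma tlst_append {K K' : ℕ} (h : K ≤ K') : ∃ ds, tlst K' = tlst K ++ ds := by
  obtain ⟨L, rfl⟩ : ∃ L, K' = K + L := ⟨K' - K, by omega⟩
  refine ⟨(List.range L).map (fun k => ((K + k : ℕ) : ℂ) + 1), ?_⟩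
  unfold tlst
  rw [List.range_add, List.map_append, List.map_map]
  refine congrArg _ (List.map_congr_left fun k _ => by simp [Function.comp])

lemma nlst_append {K K' : ℕ} (h : K ≤ K') : ∃ ds, nlst K' = nlst K ++ ds := by
  obtain ⟨ds, hds⟩ := tlst_append h
  exact ⟨ds, by rw [nlst, hds]; rfl⟩

include hadd hsmul in
lemma Qit_nl_ext {K K' : ℕ} (hK : K ≤ K') {x : P} (h : Qit Df (nlst K) x = 0) :
    Qit Df (nlst K') x = 0 := by
  obtain ⟨ds, hds⟩ := nlst_append hK
  rw [hds, Qit_swap hadd hsmul, Qit_append, h, Qit_zero hsmul]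

lemma mem_nlst_cases {c : ℂ} {K : ℕ} (hc : c ∈ nlst K) :
    c = 0 ∨ ∃ k : ℕ, c = (k : ℂ) + 1 := by
  simp only [nlst, tlst, List.mem_cons, List.mem_map] at hc
  rcases hc with rfl | ⟨k, _, rfl⟩
  · exact Or.inl rfl
  · exact Or.inr ⟨k, rfl⟩

lemma prod_neg_one_nlst (K : ℕ) : (((nlst K).map (fun c => (-1 : ℂ) - c)).prod) ≠ 0 := by
  apply List.prod_ne_zero
  intro hx
  simp only [List.mem_map] at hx
  obtain ⟨c, hc, hc0⟩ := hx
  rcases mem_nlst_cases hc with rfl | ⟨k, rfl⟩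
  · norm_num at hc0
  · have h2 : ((k + 2 : ℕ) : ℂ) = 0 := by push_cast; linear_combination -hc0
    exact absurd (Nat.cast_eq_zero.mp h2) (by omega)

lemma prod_neg_tlst (K : ℕ) : (((tlst K).map (fun c => -c)).prod) ≠ 0 := by
  apply List.prod_ne_zero
  intro hx
  simp only [tlst, List.map_map, List.mem_map, Function.comp] at hx
  obtain ⟨k, _, hk⟩ := hx
  have h2 : ((k + 1 : ℕ) : ℂ) = 0 := by push_cast; linear_combination -hk
  exact absurd (Nat.cast_eq_zero.mp h2) (by omega)

lemma prod_zero_of_mem {μ : ℂ} {cs : List ℂ} (hμ : μ ∈ cs) :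
    ((cs.map (fun c => μ - c)).prod) = 0 :=
  List.prod_eq_zero (List.mem_map.mpr ⟨μ, hμ, sub_self μ⟩)

lemma nat_mem_tlst {L K : ℕ} (h1 : 1 ≤ L) (h : L ≤ K) : ((L : ℕ) : ℂ) ∈ tlst K := by
  refine List.mem_map.mpr ⟨L - 1, List.mem_range.mpr (by omega), ?_⟩
  have hL : L - 1 + 1 = L := by omega
  rw [← hL]
  push_cast
  ring

lemma nat_mem_nlst {L K : ℕ} (h : L ≤ K) : ((L : ℕ) : ℂ) ∈ nlst K := by
  rcases Nat.eq_zero_or_pos L with rfl | hL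
  · simp [nlst]
  · exact List.mem_cons_of_mem _ (nat_mem_tlst hL h)

end Qmach
section Qshift
variable {V : Type} [AddCommGroup V] [Module ℂ V]
variable {ι : Type} [Fintype ι] [DecidableEq ι]
variable {P : Type} [AddCommGroup P] [Module ℂ P]
variable {g : ZMod 2 → Submodule ℂ V} {B : V →ₗ[ℂ] V →ₗ[ℂ] ℂ}
variable {α β : Module.Basis ι ℂ V} {p : ι → ZMod 2}
variable {ρ : V →ₗ[ℂ] ℤ → Module.End ℂ P}

lemma Qit_sum {Df : P → P} (hadd : ∀ v w, Df (v + w) = Df v + Df w)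
    (hsmul : ∀ (c : ℂ) (v : P), Df (c • v) = c • Df v)
    {A : Type} (s : Finset A) (f : A → P) (cs : List ℂ) :
    Qit Df cs (∑ a ∈ s, f a) = ∑ a ∈ s, Qit Df cs (f a) :=
  map_sum (AddMonoidHom.mk' (Qit Df cs) (Qit_add hadd hsmul cs)) f s

lemma tlst_succ (K : ℕ) : tlst (K + 1) = (nlst K).map (fun c => c + 1) := by
  unfold nlst tlst
  rw [List.range_succ_eq_map, List.map_cons, List.map_cons, List.map_map, List.map_map]
  refine congrArg₂ List.cons (by norm_num) (List.map_congr_left fun k _ => ?_)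
  simp only [Function.comp]
  push_cast
  ring

lemma Qit_beta (hRep : IsRep g B ρ) (hS : SMB ρ)
    (hα : ∀ i, (α i : V) ∈ g (p i)) (hβ : ∀ i, (β i : V) ∈ g (p i))
    (hdual : ∀ i j, B (α i) (β j) = if i = j then 1 else 0)
    (j : ι) {n : ℤ} (hn : n < 0) (cs : List ℂ) (w : P) :
    Qit (DD ρ α β hS) (cs.map (fun c => c + 1)) (ρ (β j) n w)
      = ρ (β j) n (Qit (DD ρ α β hS) cs w) := by
  induction cs with
  | nil => rfl
  | cons c cs ih =>
    show DD ρ α β hS (Qit _ (cs.map _) (ρ (β j) n w))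
        - (c + 1) • Qit _ (cs.map _) (ρ (β j) n w) = _
    rw [ih, DD_beta hRep hS hα hβ hdual j hn]
    show _ = ρ (β j) n (DD ρ α β hS (Qit _ cs w) - c • Qit _ cs w)
    rw [map_sub, map_smul]
    module

lemma kerD_gs (hRep : IsRep g B ρ) (hS : SMB ρ)
    (hα : ∀ i, (α i : V) ∈ g (p i)) (hβ : ∀ i, (β i : V) ∈ g (p i))
    (hdual : ∀ i j, B (α i) (β j) = if i = j then 1 else 0)
    (hsym : ∀ (i j : ZMod 2) (x y : V), x ∈ g i → y ∈ g j →
      B x y = (-1 : ℂ) ^ (i.val * j.val) * B y x)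
    (hSpec : ∀ z : P, ∃ K, Qit (DD ρ α β hS) (nlst K) z = 0)
    {y : P} (hy : DD ρ α β hS y = 0) : y ∈ gs ρ := by
  intro a n hn
  rw [rho_expand ρ α a n y]
  refine Finset.sum_eq_zero fun j _ => ?_
  suffices h : ρ (α j) n y = 0 by rw [h, smul_zero]
  have h1 : DD ρ α β hS (ρ (α j) n y) = -(ρ (α j) n y) := by
    rw [DD_alpha hRep hS hα hβ hdual hsym j hn y, hy, map_zero, zero_sub]
  have hDz : DD ρ α β hS (ρ (α j) n y) = (-1 : ℂ) • (ρ (α j) n y) := by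
    rw [h1]; exact (neg_one_smul ℂ _).symm
  obtain ⟨K, hK⟩ := hSpec (ρ (α j) n y)
  rw [Qit_eigen (DD_add hS) (DD_smul hS) hDz (nlst K)] at hK
  rcases smul_eq_zero.mp hK with h | h
  · exact absurd h (prod_neg_one_nlst K)
  · exact h

def PB (ρ : V →ₗ[ℂ] ℤ → Module.End ℂ P) (N : ℤ) (x : P) : Prop :=
  ∀ l : List (V × ℤ), l ≠ [] → (∀ q ∈ l, 0 < q.2) → N < (l.map Prod.snd).sum →
    l.foldr (fun pr y => ρ pr.1 pr.2 y) x = 0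

lemma PB_mode {N : ℤ} {x : P} (h : PB ρ N x) {a : V} {m : ℤ} (hm : 0 < m) :
    PB ρ (N - m) (ρ a m x) := by
  intro l hl hpos hsum
  have h2 := h (l ++ [(a, m)]) (by simp) ?_ ?_
  · rwa [List.foldr_append] at h2
  · intro q hq
    rcases List.mem_append.mp hq with h' | h'
    · exact hpos q h'
    · simp only [List.mem_singleton] at h'
      rw [h']
      exact hm
  · rw [List.map_append, List.sum_append]
    simp only [List.map_cons, List.map_nil, List.sum_cons, List.sum_nil, add_zero]
    omega

lemma PB_gs {N : ℤ} {x : P} (h : PB ρ N x) (hN : N ≤ 0) : x ∈ gs ρ := by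
  intro a m hm
  have h2 := h [(a, m)] (by simp) (by simpa using hm)
    (by simp only [List.map_cons, List.map_nil, List.sum_cons, List.sum_nil, add_zero]; omega)
  simpa using h2

lemma PB_good {N : ℤ} {x : P} (h : PB ρ N x) : good ρ (max N 0) x := by
  intro a m hm
  rw [max_lt_iff] at hm
  have h2 := h [(a, m)] (by simp) (by simpa using hm.2)
    (by simp only [List.map_cons, List.map_nil, List.sum_cons, List.sum_nil, add_zero]; omega)
  simpa using h2

lemma SpecM (hRep : IsRep g B ρ) (hS : SMB ρ)
    (hα : ∀ i, (α i : V) ∈ g (p i)) (hβ : ∀ i, (β i : V) ∈ g (p i))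
    (hdual : ∀ i j, B (α i) (β j) = if i = j then 1 else 0)
    (hsym : ∀ (i j : ZMod 2) (x y : V), x ∈ g i → y ∈ g j →
      B x y = (-1 : ℂ) ^ (i.val * j.val) * B y x)
    (hPB : ∀ x : P, ∃ N, PB ρ N x) :
    ∀ x : P, ∃ K, Qit (DD ρ α β hS) (nlst K) x = 0 := by
  suffices h : ∀ (n : ℕ) (x : P) (N : ℤ), PB ρ N x → N.toNat = n →
      ∃ K, Qit (DD ρ α β hS) (nlst K) x = 0 by
    intro x
    obtain ⟨N, hN⟩ := hPB x
    exact h N.toNat x N hN rfl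
  intro n
  induction n using Nat.strong_induction_on with
  | _ n IH =>
    intro x N hPBx hn
    by_cases hN0 : N ≤ 0
    · have hgs := PB_gs hPBx hN0
      refine ⟨0, ?_⟩
      show DD ρ α β hS (Qit _ [] x) - (0:ℂ) • (Qit _ [] x) = 0
      show DD ρ α β hS x - (0:ℂ) • x = 0
      rw [gs_DD hS hgs, zero_smul, sub_zero]
    · push_neg at hN0
      have hgood : good ρ N x := by
        have := PB_good hPBx
        rwa [max_eq_left (by omega)] at this
      have hDx : DD ρ α β hS x = Dtr ρ α β N x := DD_eq hS hgood
      have hy : ∀ (m : ℤ) (i : ι), ∃ K, (1 ≤ m → m ≤ N →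
          Qit (DD ρ α β hS) (nlst K) (ρ (α i) m x) = 0) := by
        intro m i
        by_cases hm : 1 ≤ m ∧ m ≤ N
        · obtain ⟨K, hK⟩ := IH (N - m).toNat (by omega) (ρ (α i) m x) (N - m)
            (PB_mode hPBx (by omega)) rfl
          exact ⟨K, fun _ _ => hK⟩
        · exact ⟨0, fun h1 h2 => absurd ⟨h1, h2⟩ hm⟩
      choose Kf hKf using hy
      set K := Finset.sup (Finset.Icc (1:ℤ) N) (fun m => Finset.sup Finset.univ (fun i => Kf m i))
        with hKdef
      refine ⟨K + 1, ?_⟩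
      have e0 : Qit (DD ρ α β hS) (nlst (K+1)) x
          = Qit (DD ρ α β hS) (tlst (K+1)) (DD ρ α β hS x) := by
        have h01 : nlst (K+1) = [(0:ℂ)] ++ tlst (K+1) := rfl
        rw [h01, Qit_swap (DD_add hS) (DD_smul hS), Qit_append]
        congr 1
        show DD ρ α β hS (Qit _ [] x) - (0:ℂ) • (Qit _ [] x) = _
        show DD ρ α β hS x - (0:ℂ) • x = _
        rw [zero_smul, sub_zero]
      rw [e0, hDx]
      unfold Dtr
      rw [Qit_sum (DD_add hS) (DD_smul hS)]
      refine Finset.sum_eq_zero fun m hm => ?_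
      rw [Qit_sum (DD_add hS) (DD_smul hS)]
      refine Finset.sum_eq_zero fun i _ => ?_
      simp only [Finset.mem_Icc] at hm
      rw [Qit_smul (DD_add hS) (DD_smul hS), tlst_succ,
        Qit_beta hRep hS hα hβ hdual i (show -m < 0 by omega) (nlst K) (ρ (α i) m x)]
      have hKle : Kf m i ≤ K := by
        refine le_trans (Finset.le_sup (Finset.mem_univ i)) ?_
        rw [hKdef]
        exact Finset.le_sup (f := fun m => Finset.sup Finset.univ (fun i => Kf m i))
          (Finset.mem_Icc.mpr hm)
      rw [Qit_nl_ext (DD_add hS) (DD_smul hS) hKle (hKf m i (by omega) (by omega)),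
        map_zero, smul_zero]

end Qshift
section Jside
variable {V : Type} [AddCommGroup V] [Module ℂ V]
variable {ι : Type} [Fintype ι] [DecidableEq ι]
variable {g : ZMod 2 → Submodule ℂ V} {B : V →ₗ[ℂ] V →ₗ[ℂ] ℂ}
variable {α β : Module.Basis ι ℂ V} {p : ι → ZMod 2}
variable {W J : Type} [AddCommGroup W] [Module ℂ W] [AddCommGroup J] [Module ℂ J]
variable {ρJ : V →ₗ[ℂ] ℤ → Module.End ℂ J} {ιJ : W →ₗ[ℂ] J}

noncomputable def resRep (ρJ : V →ₗ[ℂ] ℤ → Module.End ℂ J) (J' : Submodule ℂ J)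
    (hinv : ∀ (a : V) (m : ℤ), m ≠ 0 → ∀ v ∈ J', ρJ a m v ∈ J') :
    V →ₗ[ℂ] ℤ → Module.End ℂ J' where
  toFun a := fun m =>
    if h : m = 0 then 0 else ((ρJ a m).restrict (fun v hv => hinv a m h v hv))
  map_add' a b := by
    funext m
    by_cases h : m = 0
    · simp only [dif_pos h, Pi.add_apply]
      exact (add_zero _).symm
    · ext x
      have hab : ρJ (a + b) m = ρJ a m + ρJ b m := by rw [map_add]; rfl
      simp only [dif_neg h, Pi.add_apply, LinearMap.add_apply]
      simp only [LinearMap.restrict_apply, Submodule.coe_add, hab, LinearMap.add_apply]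
  map_smul' c a := by
    funext m
    by_cases h : m = 0
    · simp only [dif_pos h, RingHom.id_apply, Pi.smul_apply, smul_zero]
    · ext x
      have hca : ρJ (c • a) m = c • ρJ a m := by rw [map_smul]; rfl
      simp only [dif_neg h, RingHom.id_apply, Pi.smul_apply, LinearMap.smul_apply]
      simp only [LinearMap.restrict_apply, Submodule.coe_smul, hca, LinearMap.smul_apply,
        SetLike.val_smul]

lemma resRep_apply {J' : Submodule ℂ J}
    {hinv : ∀ (a : V) (m : ℤ), m ≠ 0 → ∀ v ∈ J', ρJ a m v ∈ J'}
    (a : V) {m : ℤ} (hm : m ≠ 0) (x : J') :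
    ((resRep ρJ J' hinv a m x : J')) = ⟨ρJ a m (x : J), hinv a m hm x.1 x.2⟩ := by
  show (if h : m = 0 then 0 else ((ρJ a m).restrict (fun v hv => hinv a m h v hv))) x = _
  rw [dif_neg hm]
  rfl

lemma resRep_coe {J' : Submodule ℂ J}
    {hinv : ∀ (a : V) (m : ℤ), m ≠ 0 → ∀ v ∈ J', ρJ a m v ∈ J'}
    (a : V) {m : ℤ} (hm : m ≠ 0) (x : J') :
    ((resRep ρJ J' hinv a m x : J') : J) = ρJ a m (x : J) := by
  rw [resRep_apply a hm]

lemma resRep_isRep {J' : Submodule ℂ J}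
    {hinv : ∀ (a : V) (m : ℤ), m ≠ 0 → ∀ v ∈ J', ρJ a m v ∈ J'}
    (hRep : IsRep g B ρJ) : IsRep g B (resRep ρJ J' hinv) := by
  intro pa pb a b ha hb m n hm hn
  ext x
  have h2 := congrArg (fun (T : Module.End ℂ J) => T (x : J))
    (hRep pa pb a b ha hb m n hm hn)
  simp only [LinearMap.sub_apply, LinearMap.smul_apply, Module.End.mul_apply,
    Module.End.one_apply] at h2
  simp only [LinearMap.sub_apply, LinearMap.smul_apply, Module.End.mul_apply,
    Module.End.one_apply, Submodule.coe_sub, SetLike.val_smul,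
    resRep_coe a hm, resRep_coe b hn]
  exact h2

lemma resRep_subtype {J' : Submodule ℂ J}
    {hinv : ∀ (a : V) (m : ℤ), m ≠ 0 → ∀ v ∈ J', ρJ a m v ∈ J'}
    (a : V) {m : ℤ} (hm : m ≠ 0) :
    J'.subtype ∘ₗ (resRep ρJ J' hinv a m) = (ρJ a m) ∘ₗ J'.subtype := by
  ext x
  simp only [LinearMap.comp_apply, Submodule.subtype_apply, resRep_apply a hm]

lemma induced_span_top (hJ : IsInducedFrom g B ρJ ιJ) (J' : Submodule ℂ J)
    (hinv : ∀ (a : V) (m : ℤ), m ≠ 0 → ∀ v ∈ J', ρJ a m v ∈ J')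
    (hι : ∀ w, ιJ w ∈ J') : ∀ v : J, v ∈ J' := by
  obtain ⟨hRepJ, hgsJ, hUP⟩ := hJ
  have hrep' : IsRep g B (resRep ρJ J' hinv) := resRep_isRep hRepJ
  set f' : W →ₗ[ℂ] J' := ιJ.codRestrict J' hι with hf'
  have hgs' : ∀ w, f' w ∈ gs (resRep ρJ J' hinv) := by
    intro w a m hm
    refine Subtype.ext ?_
    rw [resRep_apply a (by omega : m ≠ 0)]
    exact hgsJ w a m hm
  obtain ⟨G, ⟨hGint, hGι⟩, _⟩ := hUP J' (resRep ρJ J' hinv) hrep' f' hgs'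
  obtain ⟨F₀, _, huniq⟩ := hUP J ρJ hRepJ ιJ hgsJ
  have h1 : LinearMap.id = F₀ :=
    huniq LinearMap.id ⟨fun a m hm => by rw [LinearMap.id_comp, LinearMap.comp_id],
      LinearMap.id_comp ιJ⟩
  have h2 : (J'.subtype ∘ₗ G) = F₀ := by
    refine huniq _ ⟨?_, ?_⟩
    · intro a m hm
      rw [LinearMap.comp_assoc, hGint a m hm, ← LinearMap.comp_assoc,
        resRep_subtype a hm, LinearMap.comp_assoc]
    · rw [LinearMap.comp_assoc, hGι, hf', LinearMap.subtype_comp_codRestrict]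
  intro v
  have h3 : v = (J'.subtype ∘ₗ G) v := by rw [h2, ← h1]; rfl
  rw [h3]
  exact (G v).2

noncomputable def monJ (ρJ : V →ₗ[ℂ] ℤ → Module.End ℂ J) (β : Module.Basis ι ℂ V) (ιJ : W →ₗ[ℂ] J)
    (l : List (ι × ℤ)) (w : W) : J :=
  l.foldr (fun q y => ρJ (β q.1) q.2 y) (ιJ w)

noncomputable def spanJ (ρJ : V →ₗ[ℂ] ℤ → Module.End ℂ J) (β : Module.Basis ι ℂ V) (ιJ : W →ₗ[ℂ] J) :
    Submodule ℂ J :=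
  Submodule.span ℂ {v | ∃ l w, (∀ q ∈ l, q.2 < 0) ∧ v = monJ ρJ β ιJ l w}

lemma monJ_mem {l : List (ι × ℤ)} (hl : ∀ q ∈ l, q.2 < 0) (w : W) :
    monJ ρJ β ιJ l w ∈ spanJ ρJ β ιJ :=
  Submodule.subset_span ⟨l, w, hl, rfl⟩

lemma monJ_cons (i : ι) (k : ℤ) (l : List (ι × ℤ)) (w : W) :
    monJ ρJ β ιJ ((i, k) :: l) w = ρJ (β i) k (monJ ρJ β ιJ l w) := rfl

lemma spanJ_neg (a : V) {m : ℤ} (hm : m < 0) :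
    ∀ v ∈ spanJ ρJ β ιJ, ρJ a m v ∈ spanJ ρJ β ιJ := by
  intro v hv
  induction hv using Submodule.span_induction with
  | mem x hx =>
    obtain ⟨l, w, hl, rfl⟩ := hx
    rw [rho_expand ρJ β a m]
    refine Submodule.sum_mem _ fun i _ => Submodule.smul_mem _ _ ?_
    rw [← monJ_cons i m l w]
    exact monJ_mem (by
      intro q hq
      rcases List.mem_cons.mp hq with rfl | h
      · exact hm
      · exact hl q h) w
  | zero => rw [map_zero]; exact Submodule.zero_mem _
  | add x y _ _ hx hy => rw [map_add]; exact Submodule.add_mem _ hx hy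
  | smul c x _ hx => rw [map_smul]; exact Submodule.smul_mem _ _ hx

lemma monJ_pos (hRep : IsRep g B ρJ) (hgs : ∀ w : W, ιJ w ∈ gs ρJ)
    (hα : ∀ i, (α i : V) ∈ g (p i)) (hβ : ∀ i, (β i : V) ∈ g (p i)) :
    ∀ (l : List (ι × ℤ)), (∀ q ∈ l, q.2 < 0) → ∀ (j : ι) (n : ℤ), 0 < n → ∀ w : W,
      ρJ (α j) n (monJ ρJ β ιJ l w) ∈ spanJ ρJ β ιJ := by
  intro l
  induction l with
  | nil =>
    intro _ j n hn w
    show ρJ (α j) n (ιJ w) ∈ _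
    rw [hgs w (α j) n hn]
    exact Submodule.zero_mem _
  | cons q l ih =>
    intro hl j n hn w
    obtain ⟨i, k⟩ := q
    have hk : k < 0 := hl (i, k) (List.mem_cons_self)
    have hl' : ∀ q ∈ l, q.2 < 0 := fun q hq => hl q (List.mem_cons_of_mem _ hq)
    rw [monJ_cons, rep_comm hRep (hα j) (hβ i) (by omega : n ≠ 0) (by omega : k ≠ 0)]
    refine Submodule.add_mem _ (Submodule.smul_mem _ _ ?_) (Submodule.smul_mem _ _ ?_)
    · exact spanJ_neg (β i) hk _ (ih hl' j n hn w)
    · exact monJ_mem hl' w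

lemma spanJ_pos (hRep : IsRep g B ρJ) (hgs : ∀ w : W, ιJ w ∈ gs ρJ)
    (hα : ∀ i, (α i : V) ∈ g (p i)) (hβ : ∀ i, (β i : V) ∈ g (p i))
    (a : V) {n : ℤ} (hn : 0 < n) :
    ∀ v ∈ spanJ ρJ β ιJ, ρJ a n v ∈ spanJ ρJ β ιJ := by
  intro v hv
  induction hv using Submodule.span_induction with
  | mem x hx =>
    obtain ⟨l, w, hl, rfl⟩ := hx
    rw [rho_expand ρJ α a n]
    exact Submodule.sum_mem _ fun j _ => Submodule.smul_mem _ _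
      (monJ_pos hRep hgs hα hβ l hl j n hn w)
  | zero => rw [map_zero]; exact Submodule.zero_mem _
  | add x y _ _ hx hy => rw [map_add]; exact Submodule.add_mem _ hx hy
  | smul c x _ hx => rw [map_smul]; exact Submodule.smul_mem _ _ hx

lemma spanJ_top (hJ : IsInducedFrom g B ρJ ιJ)
    (hα : ∀ i, (α i : V) ∈ g (p i)) (hβ : ∀ i, (β i : V) ∈ g (p i)) :
    ∀ v : J, v ∈ spanJ ρJ β ιJ := by
  refine induced_span_top hJ _ ?_ (fun w => monJ_mem (l := []) (by simp) w)
  intro a m hm v hv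
  rcases lt_or_gt_of_ne hm with h | h
  · exact spanJ_neg a h v hv
  · exact spanJ_pos hJ.1 hJ.2.1 hα hβ a h v hv

lemma list_sum_nonpos {l : List (ι × ℤ)} (hl : ∀ q ∈ l, q.2 < 0) :
    (l.map Prod.snd).sum ≤ 0 := by
  induction l with
  | nil => simp
  | cons q l ih =>
    simp only [List.map_cons, List.sum_cons]
    have h1 := hl q (List.mem_cons_self)
    have h2 := ih (fun q hq => hl q (List.mem_cons_of_mem _ hq))
    omega

lemma monJ_bound (hRep : IsRep g B ρJ) (hgs : ∀ w : W, ιJ w ∈ gs ρJ)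
    (hα : ∀ i, (α i : V) ∈ g (p i)) (hβ : ∀ i, (β i : V) ∈ g (p i)) :
    ∀ (l : List (ι × ℤ)), (∀ q ∈ l, q.2 < 0) → ∀ (w : W) (a : V) (m : ℤ),
      0 < m + (l.map Prod.snd).sum → ρJ a m (monJ ρJ β ιJ l w) = 0 := by
  intro l
  induction l with
  | nil =>
    intro _ w a m hm
    simp only [List.map_nil, List.sum_nil, add_zero] at hm
    exact hgs w a m hm
  | cons q l ih =>
    intro hl w a m hsum
    obtain ⟨i, k⟩ := q
    have hk : k < 0 := hl (i, k) (List.mem_cons_self)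
    have hl' : ∀ q ∈ l, q.2 < 0 := fun q hq => hl q (List.mem_cons_of_mem _ hq)
    have hsl := list_sum_nonpos hl'
    simp only [List.map_cons, List.sum_cons] at hsum
    have hm0 : 0 < m := by omega
    have hmk : ¬(m + k = 0) := by omega
    rw [monJ_cons, rho_expand ρJ α a m]
    refine Finset.sum_eq_zero fun j _ => ?_
    rw [rep_comm hRep (hα j) (hβ i) (by omega : m ≠ 0) (by omega : k ≠ 0),
      if_neg hmk, mul_zero, zero_smul, add_zero,
      ih hl' w (α j) m (by omega), map_zero, smul_zero, smul_zero]

end Jside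
section Jfacts
variable {V : Type} [AddCommGroup V] [Module ℂ V]
variable {ι : Type} [Fintype ι] [DecidableEq ι]
variable {g : ZMod 2 → Submodule ℂ V} {B : V →ₗ[ℂ] V →ₗ[ℂ] ℂ}
variable {α β : Module.Basis ι ℂ V} {p : ι → ZMod 2}
variable {W J : Type} [AddCommGroup W] [Module ℂ W] [AddCommGroup J] [Module ℂ J]
variable {ρJ : V →ₗ[ℂ] ℤ → Module.End ℂ J} {ιJ : W →ₗ[ℂ] J}

lemma SMB_J (hJ : IsInducedFrom g B ρJ ιJ)
    (hα : ∀ i, (α i : V) ∈ g (p i)) (hβ : ∀ i, (β i : V) ∈ g (p i)) : SMB ρJ := by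
  intro v
  have hv := spanJ_top hJ hα hβ v
  induction hv using Submodule.span_induction with
  | mem x hx =>
    obtain ⟨l, w, hl, rfl⟩ := hx
    exact ⟨-(l.map Prod.snd).sum,
      fun a m hm => monJ_bound hJ.1 hJ.2.1 hα hβ l hl w a m (by omega)⟩
  | zero => exact ⟨0, fun a m _ => map_zero _⟩
  | add x y _ _ hx hy =>
    obtain ⟨d1, h1⟩ := hx
    obtain ⟨d2, h2⟩ := hy
    exact ⟨max d1 d2, good_add (good_mono h1 (le_max_left _ _)) (good_mono h2 (le_max_right _ _))⟩
  | smul c x _ hx =>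
    obtain ⟨d, h⟩ := hx
    exact ⟨d, good_smul c h⟩

lemma monJ_eigen (hJ : IsInducedFrom g B ρJ ιJ)
    (hα : ∀ i, (α i : V) ∈ g (p i)) (hβ : ∀ i, (β i : V) ∈ g (p i))
    (hdual : ∀ i j, B (α i) (β j) = if i = j then 1 else 0) (hS : SMB ρJ) :
    ∀ (l : List (ι × ℤ)), (∀ q ∈ l, q.2 < 0) → ∀ w : W,
      DD ρJ α β hS (monJ ρJ β ιJ l w) = (l.length : ℂ) • monJ ρJ β ιJ l w := by
  intro l
  induction l with
  | nil =>
    intro _ w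
    simp only [List.length_nil, Nat.cast_zero, zero_smul]
    exact gs_DD hS (hJ.2.1 w)
  | cons q l ih =>
    intro hl w
    obtain ⟨i, k⟩ := q
    have hk : k < 0 := hl (i, k) (List.mem_cons_self)
    have hl' : ∀ q ∈ l, q.2 < 0 := fun q hq => hl q (List.mem_cons_of_mem _ hq)
    rw [monJ_cons, DD_beta hJ.1 hS hα hβ hdual i hk, ih hl' w, map_smul, List.length_cons]
    push_cast
    module

lemma SpecJ (hJ : IsInducedFrom g B ρJ ιJ)
    (hα : ∀ i, (α i : V) ∈ g (p i)) (hβ : ∀ i, (β i : V) ∈ g (p i))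
    (hdual : ∀ i j, B (α i) (β j) = if i = j then 1 else 0) (hS : SMB ρJ) :
    ∀ x : J, ∃ K, Qit (DD ρJ α β hS) (nlst K) x = 0 := by
  intro x
  have hv := spanJ_top hJ hα hβ x
  induction hv using Submodule.span_induction with
  | mem x hx =>
    obtain ⟨l, w, hl, rfl⟩ := hx
    refine ⟨l.length, ?_⟩
    rw [Qit_eigen (DD_add hS) (DD_smul hS) (monJ_eigen hJ hα hβ hdual hS l hl w),
      prod_zero_of_mem (nat_mem_nlst (le_refl _)), zero_smul]
  | zero => exact ⟨0, Qit_zero (DD_smul hS) _⟩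
  | add x y _ _ hx hy =>
    obtain ⟨K1, h1⟩ := hx
    obtain ⟨K2, h2⟩ := hy
    refine ⟨max K1 K2, ?_⟩
    rw [Qit_add (DD_add hS) (DD_smul hS),
      Qit_nl_ext (DD_add hS) (DD_smul hS) (le_max_left _ _) h1,
      Qit_nl_ext (DD_add hS) (DD_smul hS) (le_max_right _ _) h2, add_zero]
  | smul c x _ hx =>
    obtain ⟨K, h⟩ := hx
    exact ⟨K, by rw [Qit_smul (DD_add hS) (DD_smul hS), h, smul_zero]⟩

lemma P0_ext (hS : SMB ρJ) (hgsJ : ∀ w : W, ιJ w ∈ gs ρJ) {K K' : ℕ} (h : K ≤ K')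
    {x : J} {w : W} (hx : Qit (DD ρJ α β hS) (tlst K) x = ιJ w) :
    ∃ w', Qit (DD ρJ α β hS) (tlst K') x = ιJ w' := by
  obtain ⟨ds, hds⟩ := tlst_append h
  have h0 : DD ρJ α β hS (ιJ w) = (0 : ℂ) • ιJ w := by rw [gs_DD hS (hgsJ w), zero_smul]
  rw [hds, Qit_swap (DD_add hS) (DD_smul hS), Qit_append, hx,
    Qit_eigen (DD_add hS) (DD_smul hS) h0 ds]
  exact ⟨((ds.map (fun c => 0 - c)).prod) • w, (map_smul ιJ _ _).symm⟩

lemma P0J (hJ : IsInducedFrom g B ρJ ιJ)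
    (hα : ∀ i, (α i : V) ∈ g (p i)) (hβ : ∀ i, (β i : V) ∈ g (p i))
    (hdual : ∀ i j, B (α i) (β j) = if i = j then 1 else 0) (hS : SMB ρJ) :
    ∀ v : J, ∃ (K : ℕ) (w : W), Qit (DD ρJ α β hS) (tlst K) v = ιJ w := by
  intro v
  have hv := spanJ_top hJ hα hβ v
  induction hv using Submodule.span_induction with
  | mem x hx =>
    obtain ⟨l, w, hl, rfl⟩ := hx
    cases l with
    | nil => exact ⟨0, w, rfl⟩
    | cons q l' =>
      refine ⟨(q :: l').length, 0, ?_⟩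
      rw [Qit_eigen (DD_add hS) (DD_smul hS) (monJ_eigen hJ hα hβ hdual hS (q :: l') hl w),
        prod_zero_of_mem (nat_mem_tlst (by simp) (le_refl _)), zero_smul, map_zero]
  | zero => exact ⟨0, 0, by rw [map_zero]; rfl⟩
  | add x y _ _ hx hy =>
    obtain ⟨K1, w1, h1⟩ := hx
    obtain ⟨K2, w2, h2⟩ := hy
    obtain ⟨w1', h1'⟩ := P0_ext hS hJ.2.1 (le_max_left K1 K2) h1
    obtain ⟨w2', h2'⟩ := P0_ext hS hJ.2.1 (le_max_right K1 K2) h2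
    exact ⟨max K1 K2, w1' + w2',
      by rw [Qit_add (DD_add hS) (DD_smul hS), h1', h2', map_add]⟩
  | smul c x _ hx =>
    obtain ⟨K, w, h⟩ := hx
    exact ⟨K, c • w, by rw [Qit_smul (DD_add hS) (DD_smul hS), h, map_smul]⟩

lemma Fmode {P Q : Type} [AddCommGroup P] [Module ℂ P] [AddCommGroup Q] [Module ℂ Q]
    {ρP : V →ₗ[ℂ] ℤ → Module.End ℂ P} {ρQ : V →ₗ[ℂ] ℤ → Module.End ℂ Q}
    (F : P →ₗ[ℂ] Q) (hF : Intertwines ρP ρQ F) (a : V) {m : ℤ} (hm : m ≠ 0) (v : P) :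
    F (ρP a m v) = ρQ a m (F v) := by
  have := LinearMap.congr_fun (hF a m hm) v
  simpa using this

lemma F_DD {P Q : Type} [AddCommGroup P] [Module ℂ P] [AddCommGroup Q] [Module ℂ Q]
    {ρP : V →ₗ[ℂ] ℤ → Module.End ℂ P} {ρQ : V →ₗ[ℂ] ℤ → Module.End ℂ Q}
    (hSP : SMB ρP) (hSQ : SMB ρQ)
    (F : P →ₗ[ℂ] Q) (hF : Intertwines ρP ρQ F) (v : P) :
    F (DD ρP α β hSP v) = DD ρQ α β hSQ (F v) := by
  obtain ⟨d, hd⟩ := hSP v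
  have hd1 : good ρP (max d 0) v := good_mono hd (le_max_left _ _)
  have hd2 : good ρQ (max d 0) (F v) := by
    intro a m hm
    rw [← Fmode F hF a (by omega : m ≠ 0), hd1 a m hm, map_zero]
  rw [DD_eq hSP hd1, DD_eq hSQ hd2]
  unfold Dtr
  rw [map_sum]
  refine Finset.sum_congr rfl fun m hm => ?_
  rw [map_sum]
  refine Finset.sum_congr rfl fun i _ => ?_
  simp only [Finset.mem_Icc] at hm
  rw [map_smul, Fmode F hF (β i) (by omega : -m ≠ 0), Fmode F hF (α i) (by omega : m ≠ 0)]

end Jfacts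

lemma tlst_snoc (K : ℕ) : tlst (K + 1) = tlst K ++ [((K : ℕ) : ℂ) + 1] := by
  unfold tlst
  rw [List.range_succ, List.map_append]
  rfl

lemma nlst_snoc (K : ℕ) : nlst (K + 1) = nlst K ++ [((K : ℕ) : ℂ) + 1] := by
  rw [nlst, nlst, tlst_snoc]
  rfl


/-- Every `h̃`-module `M` which is bounded below is isomorphic, via the
canonical map extending the inclusion of ground states, to the module induced from
`M_gs`: if `J` is induced from `gs ρM` (universal property) and `F : J → M` is the
canonical morphism with `F ∘ ιJ = inclusion`, then `F` is an isomorphism. -/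
theorem induced_from_ground_states_iso
    {ι : Type} [Fintype ι] [DecidableEq ι]
    (g : ZMod 2 → Submodule ℂ V) [DirectSum.Decomposition g]
    (B : V →ₗ[ℂ] V →ₗ[ℂ] ℂ)
    (α β : Module.Basis ι ℂ V)
    (hdual : ∀ i j, B (α i) (β j) = if i = j then 1 else 0)
    (p : ι → ZMod 2)
    (hα : ∀ i, (α i : V) ∈ g (p i)) (hβ : ∀ i, (β i : V) ∈ g (p i))
    (heven : ∀ (i j : ZMod 2) (x y : V), x ∈ g i → y ∈ g j → i ≠ j → B x y = 0)
    (hsym : ∀ (i j : ZMod 2) (x y : V), x ∈ g i → y ∈ g j →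
      B x y = (-1 : ℂ) ^ (i.val * j.val) * B y x)
    {M J : Type} [AddCommGroup M] [Module ℂ M] [AddCommGroup J] [Module ℂ J]
    (ρM : V →ₗ[ℂ] ℤ → Module.End ℂ M) (hM : IsRep g B ρM) (hbdd : BoundedBelow ρM)
    (ρJ : V →ₗ[ℂ] ℤ → Module.End ℂ J) (ιJ : (gs ρM : Submodule ℂ M) →ₗ[ℂ] J)
    (hJ : IsInducedFrom g B ρJ ιJ)
    (F : J →ₗ[ℂ] M) (hF : Intertwines ρJ ρM F)
    (hFι : F ∘ₗ ιJ = (gs ρM).subtype) :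
    Function.Bijective F := by
  have hPBM : ∀ x : M, ∃ N, PB ρM N x := fun x =>
    (hbdd x).imp fun N h l hl _ hsum => h l hl hsum
  have hSM : SMB ρM := fun x => by
    obtain ⟨N, h⟩ := hPBM x
    exact ⟨max N 0, PB_good h⟩
  have hSJ : SMB ρJ := SMB_J (p := p) hJ hα hβ
  have hSpecM : ∀ z : M, ∃ K, Qit (DD ρM α β hSM) (nlst K) z = 0 :=
    SpecM hM hSM hα hβ hdual hsym hPBM
  -- surjectivity
  set U := LinearMap.range F with hUdef
  have hUmode : ∀ (a : V) (m : ℤ), m ≠ 0 → ∀ v ∈ U, ρM a m v ∈ U := by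
    rintro a m hm v ⟨u, rfl⟩
    exact ⟨ρJ a m u, Fmode F hF a hm u⟩
  have hUD : ∀ v ∈ U, DD ρM α β hSM v ∈ U := by
    intro v hv
    obtain ⟨d, hd⟩ := hSM v
    rw [DD_eq hSM hd]
    unfold Dtr
    refine Submodule.sum_mem _ fun m hm => Submodule.sum_mem _ fun i _ =>
      Submodule.smul_mem _ _ ?_
    simp only [Finset.mem_Icc] at hm
    exact hUmode (β i) (-m) (by omega) _ (hUmode (α i) m (by omega) v hv)
  have hUgs : ∀ v ∈ gs ρM, v ∈ U := by
    intro v hv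
    exact ⟨ιJ ⟨v, hv⟩, by simpa using LinearMap.congr_fun hFι ⟨v, hv⟩⟩
  have hsurj : ∀ x : M, x ∈ U := by
    suffices h : ∀ (n : ℕ) (x : M) (N : ℤ), PB ρM N x → N.toNat = n → x ∈ U by
      intro x
      obtain ⟨N, hN⟩ := hPBM x
      exact h N.toNat x N hN rfl
    intro n
    induction n using Nat.strong_induction_on with
    | _ n IH =>
      intro x N hPBx hn
      by_cases hN0 : N ≤ 0
      · exact hUgs x (PB_gs hPBx hN0)
      · push_neg at hN0
        have hgood : good ρM N x := by
          have := PB_good hPBx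
          rwa [max_eq_left (by omega)] at this
        have hDxU : DD ρM α β hSM x ∈ U := by
          rw [DD_eq hSM hgood]
          unfold Dtr
          refine Submodule.sum_mem _ fun m hm => Submodule.sum_mem _ fun i _ =>
            Submodule.smul_mem _ _ ?_
          simp only [Finset.mem_Icc] at hm
          refine hUmode (β i) (-m) (by omega) _ ?_
          exact IH (N - m).toNat (by omega) (ρM (α i) m x) (N - m)
            (PB_mode hPBx (by omega)) rfl
        obtain ⟨K, hK⟩ := hSpecM x
        obtain ⟨u, hu, hQU⟩ := Qit_mem (DD_add hSM) (DD_smul hSM) U hUD hDxU (tlst K)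
        have hDy : DD ρM α β hSM (Qit (DD ρM α β hSM) (tlst K) x) = 0 := by
          have h1 : Qit (DD ρM α β hSM) (nlst K) x
              = DD ρM α β hSM (Qit (DD ρM α β hSM) (tlst K) x)
                - (0:ℂ) • (Qit (DD ρM α β hSM) (tlst K) x) := rfl
          have h2 := h1.symm.trans hK
          rwa [zero_smul, sub_zero] at h2
        have hygs := kerD_gs hM hSM hα hβ hdual hsym hSpecM hDy
        have hx : x = (((tlst K).map (fun c => -c)).prod)⁻¹
            • (Qit (DD ρM α β hSM) (tlst K) x - u) := by
          rw [hQU, add_sub_cancel_right, smul_smul, inv_mul_cancel₀ (prod_neg_tlst K), one_smul]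
        rw [hx]
        exact Submodule.smul_mem _ _ (Submodule.sub_mem _ (hUgs _ hygs) hu)
  -- injectivity
  have hSpecJ := SpecJ (p := p) hJ hα hβ hdual hSJ
  have hkermode : ∀ x : J, F x = 0 → ∀ (a : V) (m : ℤ), m ≠ 0 → F (ρJ a m x) = 0 :=
    fun x hx a m hm => by rw [Fmode F hF a hm, hx, map_zero]
  have hkerD : ∀ x : J, F x = 0 → F (DD ρJ α β hSJ x) = 0 := fun x hx => by
    rw [F_DD hSJ hSM F hF, hx, DD_zero hSM]
  have hker : ∀ (K : ℕ) (x : J), F x = 0 → Qit (DD ρJ α β hSJ) (nlst K) x = 0 → x = 0 := by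
    intro K
    induction K with
    | zero =>
      intro x hx hQ
      have hDx : DD ρJ α β hSJ x = 0 := by
        have h1 : Qit (DD ρJ α β hSJ) (nlst 0) x
            = DD ρJ α β hSJ x - (0:ℂ) • x := rfl
        have h2 := h1.symm.trans hQ
        rwa [zero_smul, sub_zero] at h2
      obtain ⟨K', w, hw⟩ := P0J (p := p) hJ hα hβ hdual hSJ x
      rw [Qit_eigen (DD_add hSJ) (DD_smul hSJ) (by rw [hDx, zero_smul]) (tlst K')] at hw
      have hprod : (((tlst K').map (fun c => (0:ℂ) - c)).prod) ≠ 0 := by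
        have e : ((tlst K').map (fun c => (0:ℂ) - c)) = ((tlst K').map (fun c => -c)) :=
          List.map_congr_left fun c _ => zero_sub c
        rw [e]
        exact prod_neg_tlst K'
      have hx3 : x = ιJ ((((tlst K').map (fun c => (0:ℂ) - c)).prod)⁻¹ • w) := by
        rw [map_smul, ← hw, smul_smul, inv_mul_cancel₀ hprod, one_smul]
      have h5 := LinearMap.congr_fun hFι ((((tlst K').map (fun c => (0:ℂ) - c)).prod)⁻¹ • w)
      simp only [LinearMap.comp_apply, Submodule.subtype_apply] at h5
      rw [← hx3, hx] at h5
      have hw0 : (((tlst K').map (fun c => (0:ℂ) - c)).prod)⁻¹ • w = 0 := by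
        apply Subtype.ext
        exact h5.symm
      rw [hx3, hw0, map_zero]
    | succ K IHK =>
      intro x hx hQ
      rw [nlst_snoc, Qit_append] at hQ
      have hx1 : DD ρJ α β hSJ x - (((K : ℕ) : ℂ) + 1) • x = 0 := by
        refine IHK _ ?_ hQ
        rw [map_sub, map_smul, hkerD x hx, hx, smul_zero, sub_zero]
      have hDx : DD ρJ α β hSJ x = (((K : ℕ) : ℂ) + 1) • x := by rwa [sub_eq_zero] at hx1
      have hgsx : x ∈ gs ρJ := by
        intro a n hn
        rw [rho_expand ρJ α a n x]
        refine Finset.sum_eq_zero fun j _ => ?_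
        suffices h : ρJ (α j) n x = 0 by rw [h, smul_zero]
        have hDz : DD ρJ α β hSJ (ρJ (α j) n x) = ((K : ℕ) : ℂ) • (ρJ (α j) n x) := by
          rw [DD_alpha hJ.1 hSJ hα hβ hdual hsym j hn x, hDx, map_smul]
          module
        have hFz : F (ρJ (α j) n x) = 0 := hkermode x hx (α j) n (by omega)
        have hQz : Qit (DD ρJ α β hSJ) (nlst K) (ρJ (α j) n x) = 0 := by
          rw [Qit_eigen (DD_add hSJ) (DD_smul hSJ) hDz,
            prod_zero_of_mem (nat_mem_nlst (le_refl K)), zero_smul]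
        exact IHK _ hFz hQz
      have hDx0 : DD ρJ α β hSJ x = 0 := gs_DD hSJ hgsx
      rw [hDx0] at hDx
      rcases smul_eq_zero.mp hDx.symm with h | h
      · exact absurd h (Nat.cast_add_one_ne_zero K)
      · exact h
  constructor
  · refine (injective_iff_map_eq_zero F).mpr ?_
    intro x hx
    obtain ⟨K, hK⟩ := hSpecJ x
    exact hker K x hx hK
  · intro x
    exact LinearMap.mem_range.mp (hsurj x)


end Stmt9
end

section
/- Let h = ℂ^{0|2} with odd basis χ⁺, χ⁻. Define representations ξ_{k,ε,δ} (k ∈ ℤ_{≥0}, ε,δ ∈ {0,1}) on ℂ^{k+ε+δ|k+1} by χ⁺eⁱ = oⁱ⁺¹, χ⁻eⁱ = oⁱ, χ⁺e^{[ε]} = o¹, χ⁻e^{[ε]} = 0, χ⁺e^{[δ]} = 0, χ⁻e^{[δ]} = o^{k+1}, and χ^± oⁱ = 0. Then in ξ_{k,ε,δ}, the joint kernel of χ⁺ and χ⁻ is exactly the odd part V₁ of dimension 0|(k+1); consequently the representations ξ_{k,ε,δ} and their parity shifts ξ_{k,ε,δ} ⊗ ℂ^{0|1} are pairwise non-isomorphic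 for distinct (k,ε,δ) with the same underlying dimension of joint kernel distinguishing parity shifts. -/
namespace Stmt11

/-- Index type for the even basis vectors `e^{[ε]}, e¹, …, e^k, e^{[δ]}` of
`ξ_{k,ε,δ}`: elements of `Fin (k+2)`, where index `0` (the vector `e^{[ε]}`) is present
only if `ε = 1` and index `k+1` (the vector `e^{[δ]}`) only if `δ = 1`; the indices
`1,…,k` are the vectors `e¹,…,e^k`. -/
def EIdx (k : ℕ) (ε δ : Bool) : Type :=
  {i : Fin (k + 2) // (i = 0 → ε = true) ∧ (i = Fin.last (k + 1) → δ = true)}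

instance (k : ℕ) (ε δ : Bool) : Fintype (EIdx k ε δ) := by
  unfold EIdx; infer_instance

instance (k : ℕ) (ε δ : Bool) : DecidableEq (EIdx k ε δ) := by
  unfold EIdx; infer_instance

/-- The underlying super-vector space of `ξ_{k,ε,δ}`: even part of dimension `k+ε+δ`
spanned by the `e`'s, odd part of dimension `k+1` spanned by `o¹,…,o^{k+1}`
(0-indexed below). -/
abbrev Xi (k : ℕ) (ε δ : Bool) : Type := (EIdx k ε δ → ℂ) × (Fin (k + 1) → ℂ)

/-- The action of `χ⁺`: `χ⁺ eⁱ = oⁱ⁺¹` (`1 ≤ i ≤ k`), `χ⁺ e^{[ε]} = o¹`,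
`χ⁺ e^{[δ]} = 0`, `χ⁺ oⁱ = 0`.  (In 0-indexed form: the even basis vector of index
`i : Fin (k+2)`, `i ≠ k+1`, is sent to the odd basis vector of index `i`.) -/
noncomputable def chiP (k : ℕ) (ε δ : Bool) : Xi k ε δ →ₗ[ℂ] Xi k ε δ where
  toFun v := (0, fun j => ∑ i : EIdx k ε δ, if ((i.1 : ℕ) = (j : ℕ)) then v.1 i else 0)
  map_add' v w := by
    ext j
    · simp
    · dsimp only
      simp only [Prod.mk_add_mk, Pi.add_apply]
      rw [← Finset.sum_add_distrib]
      exact Finset.sum_congr rfl fun i _ => by split <;> simp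
  map_smul' c v := by
    ext j
    · simp
    · simp [Finset.mul_sum, mul_ite]

/-- The action of `χ⁻`: `χ⁻ eⁱ = oⁱ` (`1 ≤ i ≤ k`), `χ⁻ e^{[ε]} = 0`,
`χ⁻ e^{[δ]} = o^{k+1}`, `χ⁻ oⁱ = 0`.  (In 0-indexed form: the even basis vector of
index `i ≠ 0` is sent to the odd basis vector of index `i - 1`.) -/
noncomputable def chiM (k : ℕ) (ε δ : Bool) : Xi k ε δ →ₗ[ℂ] Xi k ε δ where
  toFun v := (0, fun j => ∑ i : EIdx k ε δ, if ((i.1 : ℕ) = (j : ℕ) + 1) then v.1 i else 0)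
  map_add' v w := by
    ext j
    · simp
    · dsimp only
      simp only [Prod.mk_add_mk, Pi.add_apply]
      rw [← Finset.sum_add_distrib]
      exact Finset.sum_congr rfl fun i _ => by split <;> simp
  map_smul' c v := by
    ext j
    · simp
    · simp [Finset.mul_sum, mul_ite]

lemma sum_ind {k : ℕ} {ε δ : Bool} (x : EIdx k ε δ → ℂ) (m : ℕ) (i₀ : EIdx k ε δ)
    (h : (i₀.1 : ℕ) = m) :
    ∑ i : EIdx k ε δ, (if ((i.1 : ℕ) = m) then x i else 0) = x i₀ := by
  rw [Finset.sum_eq_single i₀]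
  · rw [if_pos h]
  · intro b _ hb
    rw [if_neg]
    intro hbm
    exact hb (Subtype.ext (Fin.ext (by omega)))
  · intro h'; exact absurd (Finset.mem_univ _) h'

lemma chiP_snd {k : ℕ} {ε δ : Bool} (v : Xi k ε δ) (j : Fin (k + 1)) :
    (chiP k ε δ v).2 j = ∑ i : EIdx k ε δ, (if ((i.1 : ℕ) = (j : ℕ)) then v.1 i else 0) := rfl

lemma chiM_snd {k : ℕ} {ε δ : Bool} (v : Xi k ε δ) (j : Fin (k + 1)) :
    (chiM k ε δ v).2 j = ∑ i : EIdx k ε δ, (if ((i.1 : ℕ) = (j : ℕ) + 1) then v.1 i else 0) := rfl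

lemma chiP_fst {k : ℕ} {ε δ : Bool} (v : Xi k ε δ) : (chiP k ε δ v).1 = 0 := rfl
lemma chiM_fst {k : ℕ} {ε δ : Bool} (v : Xi k ε δ) : (chiM k ε δ v).1 = 0 := rfl

lemma kernel_even {k : ℕ} {ε δ : Bool} (v : Xi k ε δ)
    (hP : (chiP k ε δ v).2 = 0) (hM : (chiM k ε δ v).2 = 0) : v.1 = 0 := by
  funext i
  by_cases hi : (i.1 : ℕ) ≤ k
  · have h1 := congrFun hP ⟨(i.1 : ℕ), by omega⟩
    rw [chiP_snd, sum_ind v.1 _ i rfl] at h1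
    exact h1
  · have hik : (i.1 : ℕ) = k + 1 := by have := i.1.isLt; omega
    have h1 := congrFun hM ⟨k, by omega⟩
    rw [chiM_snd, sum_ind v.1 _ i (by simpa using hik)] at h1
    exact h1

lemma kerM_even {k : ℕ} {ε δ : Bool} (x : EIdx k ε δ → ℂ)
    (h : (chiM k ε δ ((x, 0) : Xi k ε δ)).2 = 0)
    (i : EIdx k ε δ) (hi : i.1 ≠ 0) : x i = 0 := by
  have hval : 1 ≤ (i.1 : ℕ) := by
    rcases Nat.eq_zero_or_pos (i.1 : ℕ) with h0 | h0
    · exact absurd (Fin.ext h0) hi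
    · exact h0
  have hlt : (i.1 : ℕ) - 1 < k + 1 := by have := i.1.isLt; omega
  have h1 := congrFun h ⟨(i.1 : ℕ) - 1, hlt⟩
  rw [chiM_snd, sum_ind x _ i (by simp; omega)] at h1
  exact h1

lemma kerP_even {k : ℕ} {ε δ : Bool} (x : EIdx k ε δ → ℂ)
    (h : (chiP k ε δ ((x, 0) : Xi k ε δ)).2 = 0)
    (i : EIdx k ε δ) (hi : i.1 ≠ Fin.last (k + 1)) : x i = 0 := by
  have hval : (i.1 : ℕ) ≤ k := by
    have := i.1.isLt
    have : (i.1 : ℕ) ≠ k + 1 := fun hc => hi (Fin.ext (by simpa using hc))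
    omega
  have h1 := congrFun h ⟨(i.1 : ℕ), by omega⟩
  rw [chiP_snd, sum_ind x _ i rfl] at h1
  exact h1

lemma keyM {k k' : ℕ} {ε δ ε' δ' : Bool}
    (e : Xi k ε δ ≃ₗ[ℂ] Xi k' ε' δ')
    (hev : ∀ x : EIdx k ε δ → ℂ, ((e ((x, 0) : Xi k ε δ)).2 : Fin (k' + 1) → ℂ) = 0)
    (hint : ∀ v : Xi k ε δ, e (chiM k ε δ v) = chiM k' ε' δ' (e v))
    (hε : ε = true) (hε' : ε' = false) : False := by
  classical
  have h0last : (0 : Fin (k + 2)) ≠ Fin.last (k + 1) := by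
    simp [Fin.ext_iff]
  set i₀ : EIdx k ε δ := ⟨0, fun _ => hε, fun h => absurd h h0last⟩ with hi₀
  set x : EIdx k ε δ → ℂ := Pi.single i₀ 1 with hx
  have hker : chiM k ε δ ((x, 0) : Xi k ε δ) = 0 := by
    refine Prod.ext rfl ?_
    funext j
    rw [chiM_snd]
    apply Finset.sum_eq_zero
    intro i _
    by_cases hii : i = i₀
    · subst hii
      rw [if_neg]
      simp [hi₀]
    · split
      · simp [hx, Pi.single_eq_of_ne hii]
      · rfl
  have heven : e ((x, 0) : Xi k ε δ) = (((e ((x, 0) : Xi k ε δ)).1, 0) : Xi k' ε' δ') :=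
    Prod.ext rfl (hev x)
  have h2 : chiM k' ε' δ' (((e ((x, 0) : Xi k ε δ)).1, 0) : Xi k' ε' δ') = 0 := by
    rw [← heven, ← hint, hker, map_zero]
  have hall : (e ((x, 0) : Xi k ε δ)).1 = 0 := by
    funext i'
    refine kerM_even _ (by rw [h2]; rfl) i' ?_
    intro hc
    exact absurd (i'.2.1 hc) (by simp [hε'])
  have : e ((x, 0) : Xi k ε δ) = 0 := by rw [heven, hall]; rfl
  have hx0 : ((x, 0) : Xi k ε δ) = 0 := by
    apply e.injective; simpa using this
  have : x i₀ = 0 := by rw [show x = 0 from congrArg Prod.fst hx0]; rfl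
  simp [hx] at this

lemma keyP {k k' : ℕ} {ε δ ε' δ' : Bool}
    (e : Xi k ε δ ≃ₗ[ℂ] Xi k' ε' δ')
    (hev : ∀ x : EIdx k ε δ → ℂ, ((e ((x, 0) : Xi k ε δ)).2 : Fin (k' + 1) → ℂ) = 0)
    (hint : ∀ v : Xi k ε δ, e (chiP k ε δ v) = chiP k' ε' δ' (e v))
    (hδ : δ = true) (hδ' : δ' = false) : False := by
  classical
  have hlast0 : (Fin.last (k + 1) : Fin (k + 2)) ≠ 0 := by
    simp [Fin.ext_iff]
  set i₀ : EIdx k ε δ := ⟨Fin.last (k + 1), fun h => absurd h hlast0, fun _ => hδ⟩ with hi₀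
  set x : EIdx k ε δ → ℂ := Pi.single i₀ 1 with hx
  have hker : chiP k ε δ ((x, 0) : Xi k ε δ) = 0 := by
    refine Prod.ext rfl ?_
    funext j
    rw [chiP_snd]
    apply Finset.sum_eq_zero
    intro i _
    by_cases hii : i = i₀
    · subst hii
      rw [if_neg]
      simp [hi₀, Fin.last]
      omega
    · split
      · simp [hx, Pi.single_eq_of_ne hii]
      · rfl
  have heven : e ((x, 0) : Xi k ε δ) = (((e ((x, 0) : Xi k ε δ)).1, 0) : Xi k' ε' δ') :=
    Prod.ext rfl (hev x)
  have h2 : chiP k' ε' δ' (((e ((x, 0) : Xi k ε δ)).1, 0) : Xi k' ε' δ') = 0 := by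
    rw [← heven, ← hint, hker, map_zero]
  have hall : (e ((x, 0) : Xi k ε δ)).1 = 0 := by
    funext i'
    refine kerP_even _ (by rw [h2]; rfl) i' ?_
    intro hc
    exact absurd (i'.2.2 hc) (by simp [hδ'])
  have : e ((x, 0) : Xi k ε δ) = 0 := by rw [heven, hall]; rfl
  have hx0 : ((x, 0) : Xi k ε δ) = 0 := by
    apply e.injective; simpa using this
  have : x i₀ = 0 := by rw [show x = 0 from congrArg Prod.fst hx0]; rfl
  simp [hx] at this

-- symm parity / intertwining
lemma symm_props {k k' : ℕ} {ε δ ε' δ' : Bool}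
    (e : Xi k ε δ ≃ₗ[ℂ] Xi k' ε' δ')
    (hev : ∀ x : EIdx k ε δ → ℂ, (e ((x, 0) : Xi k ε δ)).2 = 0)
    (hodd : ∀ y : Fin (k + 1) → ℂ, (e ((0, y) : Xi k ε δ)).1 = 0) :
    (∀ x' : EIdx k' ε' δ' → ℂ, (e.symm ((x', 0) : Xi k' ε' δ')).2 = 0) ∧
    (∀ y' : Fin (k' + 1) → ℂ, (e.symm ((0, y') : Xi k' ε' δ')).1 = 0) := by
  have split1 : ∀ v : Xi k ε δ, e v = (((e ((v.1, 0) : Xi k ε δ)).1 : EIdx k' ε' δ' → ℂ),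
      ((e ((0, v.2) : Xi k ε δ)).2 : Fin (k' + 1) → ℂ)) := by
    intro v
    have hv : v = ((v.1, 0) : Xi k ε δ) + ((0, v.2) : Xi k ε δ) := by
      ext <;> simp
    rw [hv, map_add]
    refine Prod.ext ?_ ?_
    · simp [hodd v.2]
    · simp [hev v.1]
  constructor
  · intro x'
    set v := e.symm ((x', 0) : Xi k' ε' δ') with hvdef
    have hev2 : e v = ((x', 0) : Xi k' ε' δ') := e.apply_symm_apply _
    have h1 := split1 v
    rw [hev2] at h1
    have hsnd : (e ((0, v.2) : Xi k ε δ)).2 = 0 := (congrArg Prod.snd h1).symm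
    have hz : e ((0, v.2) : Xi k ε δ) = 0 := Prod.ext (hodd v.2) hsnd
    have h0 : ((0, v.2) : Xi k ε δ) = 0 := e.injective (by rw [map_zero]; exact hz)
    exact congrArg Prod.snd h0
  · intro y'
    set v := e.symm ((0, y') : Xi k' ε' δ') with hvdef
    have hev2 : e v = ((0, y') : Xi k' ε' δ') := e.apply_symm_apply _
    have h1 := split1 v
    rw [hev2] at h1
    have hfst : (e ((v.1, 0) : Xi k ε δ)).1 = 0 := (congrArg Prod.fst h1).symm
    have hz : e ((v.1, 0) : Xi k ε δ) = 0 := Prod.ext hfst (hev v.1)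
    have h0 : ((v.1, 0) : Xi k ε δ) = 0 := e.injective (by rw [map_zero]; exact hz)
    exact congrArg Prod.fst h0

noncomputable def oddMap {k k' : ℕ} {ε δ ε' δ' : Bool}
    (e : Xi k ε δ ≃ₗ[ℂ] Xi k' ε' δ') :
    (Fin (k + 1) → ℂ) →ₗ[ℂ] (Fin (k' + 1) → ℂ) where
  toFun y := (e ((0, y) : Xi k ε δ)).2
  map_add' y z := by
    have : ((0, y + z) : Xi k ε δ) = (0, y) + (0, z) := by ext <;> simp
    rw [this, map_add]; rfl
  map_smul' c y := by
    have : ((0, c • y) : Xi k ε δ) = c • ((0, y) : Xi k ε δ) := by ext <;> simp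
    rw [this, map_smul]; rfl

lemma oddMap_inj {k k' : ℕ} {ε δ ε' δ' : Bool}
    (e : Xi k ε δ ≃ₗ[ℂ] Xi k' ε' δ')
    (hodd : ∀ y : Fin (k + 1) → ℂ, (e ((0, y) : Xi k ε δ)).1 = 0) :
    Function.Injective (oddMap e) := by
  rw [injective_iff_map_eq_zero]
  intro y hy
  have hz : e ((0, y) : Xi k ε δ) = 0 := Prod.ext (hodd y) hy
  have h0 : ((0, y) : Xi k ε δ) = 0 := e.injective (by rw [map_zero]; exact hz)
  exact congrArg Prod.snd h0

lemma odd_dim_le {k k' : ℕ} {ε δ ε' δ' : Bool}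
    (e : Xi k ε δ ≃ₗ[ℂ] Xi k' ε' δ')
    (hodd : ∀ y : Fin (k + 1) → ℂ, (e ((0, y) : Xi k ε δ)).1 = 0) :
    k + 1 ≤ k' + 1 := by
  have := LinearMap.finrank_le_finrank_of_injective (oddMap_inj e hodd)
  simpa [Module.finrank_fintype_fun_eq_card] using this

/-- In the representation `ξ_{k,ε,δ}` of `h = ℂ^{0|2}`, the joint
kernel of `χ⁺` and `χ⁻` is exactly the odd part `V₁` (of dimension `0|(k+1)`);
consequently, representations with distinct parameters `(k,ε,δ)` are never isomorphic
as super-representations (by a parity-preserving isomorphism intertwining the action of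
`χ⁺` and `χ⁻`). -/
theorem xi_joint_kernel_and_nonisomorphic (k : ℕ) (ε δ : Bool) :
    (∀ v : Xi k ε δ, (chiP k ε δ v = 0 ∧ chiM k ε δ v = 0) ↔ v.1 = 0) ∧
    (∀ (k' : ℕ) (ε' δ' : Bool), (k, ε, δ) ≠ (k', ε', δ') →
      ¬ ∃ e : Xi k ε δ ≃ₗ[ℂ] Xi k' ε' δ',
        (∀ x : EIdx k ε δ → ℂ, (e (x, 0)).2 = 0) ∧
        (∀ y : Fin (k + 1) → ℂ, (e (0, y)).1 = 0) ∧
        (∀ v : Xi k ε δ, e (chiP k ε δ v) = chiP k' ε' δ' (e v)) ∧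
        (∀ v : Xi k ε δ, e (chiM k ε δ v) = chiM k' ε' δ' (e v))) := by
  constructor
  · intro v
    constructor
    · rintro ⟨hP, hM⟩
      exact kernel_even v (congrArg Prod.snd hP) (congrArg Prod.snd hM)
    · intro h1
      constructor <;>
      · refine Prod.ext rfl ?_
        funext j
        first
          | rw [chiP_snd]
          | rw [chiM_snd]
        apply Finset.sum_eq_zero
        intro i _
        split
        · rw [show v.1 = 0 from h1]; rfl
        · rfl
  · rintro k' ε' δ' hne ⟨e, hev, hodd, hintP, hintM⟩
    obtain ⟨hev', hodd'⟩ := symm_props e hev hodd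
    have hintP' : ∀ w : Xi k' ε' δ', e.symm (chiP k' ε' δ' w) = chiP k ε δ (e.symm w) := by
      intro w
      apply e.injective
      rw [e.apply_symm_apply, hintP, e.apply_symm_apply]
    have hintM' : ∀ w : Xi k' ε' δ', e.symm (chiM k' ε' δ' w) = chiM k ε δ (e.symm w) := by
      intro w
      apply e.injective
      rw [e.apply_symm_apply, hintM, e.apply_symm_apply]
    have hk : k = k' := by
      have h1 := odd_dim_le e hodd
      have h2 := odd_dim_le e.symm hodd'
      omega
    have hε : ε = ε' := by
      cases hε1 : ε <;> cases hε2 : ε'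
      · rfl
      · exact absurd (keyM e.symm hev' hintM' hε2 hε1) id
      · exact absurd (keyM e hev hintM hε1 hε2) id
      · rfl
    have hδ : δ = δ' := by
      cases hδ1 : δ <;> cases hδ2 : δ'
      · rfl
      · exact absurd (keyP e.symm hev' hintP' hδ2 hδ1) id
      · exact absurd (keyP e hev hintP hδ1 hδ2) id
      · rfl
    exact hne (by rw [hk, hε, hδ])


end Stmt11
end

section
/- The complete elliptic integrals of the first and second kind, K(x) = ∫₀¹ dt/√((1−t²)(1−xt²)) and E(x) = ∫₀¹ √(1−xt²)/√(1−t²) dt, satisfy (d/dx)(K(1−x)/K(x)) = −(π/4)/(x(1−x)K(x)²) for x ∈ (0,1). -/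
open Real

namespace Stmt17

/-- The complete elliptic integral of the first kind,
`K(x) = ∫₀¹ dt / √((1−t²)(1−xt²))`. -/
noncomputable def Kell (x : ℝ) : ℝ :=
  ∫ t in (0 : ℝ)..1, 1 / Real.sqrt ((1 - t ^ 2) * (1 - x * t ^ 2))

/-- The complete elliptic integral of the second kind,
`E(x) = ∫₀¹ √(1−xt²)/√(1−t²) dt`. -/
noncomputable def Eell (x : ℝ) : ℝ :=
  ∫ t in (0 : ℝ)..1, Real.sqrt (1 - x * t ^ 2) / Real.sqrt (1 - t ^ 2)

open Set MeasureTheory intervalIntegral Filter Topology Interval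

lemma one_sub_sq_pos {t : ℝ} (ht : t ∈ Ioo (0:ℝ) 1) : 0 < 1 - t^2 := by nlinarith [ht.1, ht.2]

lemma one_sub_mul_le {x t : ℝ} (hx : 0 ≤ x) (ht0 : 0 ≤ t) (ht1 : t ≤ 1) :
    1 - x ≤ 1 - x * t^2 := by nlinarith [mul_nonneg hx (by nlinarith : (0:ℝ) ≤ 1 - t^2)]

lemma one_sub_mul_pos {x t : ℝ} (hx0 : 0 ≤ x) (hx : x < 1) (ht0 : 0 ≤ t) (ht1 : t ≤ 1) :
    0 < 1 - x * t^2 := lt_of_lt_of_le (by linarith) (one_sub_mul_le hx0 ht0 ht1)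

/-- the canonical dominating function -/
noncomputable def J (t : ℝ) : ℝ := 1 / Real.sqrt (1 - t^2)

lemma J_meas : Measurable J := by unfold J; fun_prop

lemma intInt_J : IntervalIntegrable J volume 0 1 := by
  have h1 : IntervalIntegrable (fun t : ℝ => (1 - t) ^ (-(1/2) : ℝ)) volume 0 1 := by
    have := ((intervalIntegrable_rpow' (a := 0) (b := 1) (r := -(1/2))
      (by norm_num)).comp_sub_left 1).symm
    simpa using this
  rw [intervalIntegrable_iff_integrableOn_Ioo_of_le (by norm_num)] at h1 ⊢
  refine h1.mono' (J_meas.aestronglyMeasurable) ?_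
  filter_upwards [ae_restrict_mem measurableSet_Ioo] with t ht
  have h2 : 0 < 1 - t := by linarith [ht.2]
  have h3 : (1:ℝ) - t ≤ 1 - t^2 := by nlinarith [ht.1, ht.2]
  have h5 : 0 < Real.sqrt (1 - t) := Real.sqrt_pos.2 h2
  rw [Real.norm_eq_abs, abs_of_nonneg (by unfold J; positivity)]
  calc J t ≤ 1 / Real.sqrt (1 - t) := by
        unfold J; gcongr
    _ = (1 - t) ^ (-(1/2):ℝ) := by
        rw [Real.rpow_neg h2.le, Real.sqrt_eq_rpow, one_div]

lemma intInt_of_bound {f : ℝ → ℝ} (hf : Measurable f) {C : ℝ}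
    (hb : ∀ t ∈ Ioo (0:ℝ) 1, |f t| ≤ C * J t) :
    IntervalIntegrable f volume 0 1 := by
  rw [intervalIntegrable_iff_integrableOn_Ioo_of_le (by norm_num)]
  have hC : IntegrableOn (fun t => C * J t) (Ioo 0 1) volume := by
    have := intInt_J.const_mul C
    rwa [intervalIntegrable_iff_integrableOn_Ioo_of_le (by norm_num)] at this
  refine hC.mono' hf.aestronglyMeasurable ?_
  filter_upwards [ae_restrict_mem measurableSet_Ioo] with t ht
  rw [Real.norm_eq_abs]
  exact hb t ht

lemma integral_J : ∫ t in (0:ℝ)..1, J t = π / 2 := by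
  have h := integral_eq_sub_of_hasDerivAt_of_tendsto (f := Real.arcsin) (f' := J)
    (a := 0) (b := 1) (by norm_num)
    (fun t ht => by simpa [J] using Real.hasDerivAt_arcsin (by linarith [ht.1]) (ne_of_lt ht.2))
    intInt_J
    ((Real.continuous_arcsin.tendsto 0).mono_left nhdsWithin_le_nhds)
    ((Real.continuous_arcsin.tendsto 1).mono_left nhdsWithin_le_nhds)
  simpa [Real.arcsin_one, Real.arcsin_zero] using h

noncomputable def kf (x t : ℝ) : ℝ := 1 / Real.sqrt ((1 - t^2) * (1 - x*t^2))
noncomputable def ef (x t : ℝ) : ℝ := Real.sqrt (1 - x*t^2) / Real.sqrt (1 - t^2)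
noncomputable def kd (x t : ℝ) : ℝ :=
  t^2 / (2 * Real.sqrt (1-t^2) * ((1-x*t^2) * Real.sqrt (1-x*t^2)))
noncomputable def ed (x t : ℝ) : ℝ := -t^2 / (2 * Real.sqrt (1-x*t^2) * Real.sqrt (1-t^2))
noncomputable def cf (x t : ℝ) : ℝ :=
  1 / (Real.sqrt (1-t^2) * ((1-x*t^2) * Real.sqrt (1-x*t^2)))

section pointwise
variable {x t : ℝ} (hx0 : 0 ≤ x) (hx1 : x < 1) (ht : t ∈ Ioo (0:ℝ) 1)

include hx0 hx1 ht

omit hx0 hx1 in lemma s1_pos : 0 < Real.sqrt (1 - t^2) := Real.sqrt_pos.2 (one_sub_sq_pos ht)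

lemma s2_pos : 0 < Real.sqrt (1 - x*t^2) :=
  Real.sqrt_pos.2 (one_sub_mul_pos hx0 hx1 ht.1.le ht.2.le)

lemma hasDerivAt_kf : HasDerivAt (fun y => kf y t) (kd x t) x := by
  have h2 : 0 < 1 - x*t^2 := one_sub_mul_pos hx0 hx1 ht.1.le ht.2.le
  have h1 : 0 < 1 - t^2 := one_sub_sq_pos ht
  have hg : HasDerivAt (fun y : ℝ => (1 - t^2) * (1 - y*t^2)) ((1-t^2) * (-t^2)) x := by
    have : HasDerivAt (fun y : ℝ => 1 - y*t^2) (-t^2) x := by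
      simpa using ((hasDerivAt_id x).mul_const (t^2)).const_sub 1
    simpa using this.const_mul (1 - t^2)
  have hgx : (0:ℝ) < (1 - t^2) * (1 - x*t^2) := mul_pos h1 h2
  have hs : HasDerivAt (fun y : ℝ => Real.sqrt ((1 - t^2) * (1 - y*t^2)))
      ((1-t^2) * (-t^2) / (2 * Real.sqrt ((1 - t^2) * (1 - x*t^2)))) x := hg.sqrt hgx.ne'
  have hsx : Real.sqrt ((1 - t^2) * (1 - x*t^2)) ≠ 0 := (Real.sqrt_pos.2 hgx).ne'
  have := hs.inv hsx
  have heq : ∀ y : ℝ, kf y t = (Real.sqrt ((1 - t^2) * (1 - y*t^2)))⁻¹ := fun y => one_div _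
  rw [show (fun y => kf y t) = fun y => (Real.sqrt ((1 - t^2) * (1 - y*t^2)))⁻¹ from
    funext heq]
  refine this.congr_deriv ?_; symm
  have hsq : Real.sqrt ((1 - t^2) * (1 - x*t^2))
      = Real.sqrt (1-t^2) * Real.sqrt (1-x*t^2) := Real.sqrt_mul h1.le _
  have e1 : Real.sqrt (1-t^2) ^ 2 = 1 - t^2 := Real.sq_sqrt h1.le
  have e2 : Real.sqrt (1-x*t^2) ^ 2 = 1 - x*t^2 := Real.sq_sqrt h2.le
  have p1 := s1_pos ht
  have p2 := s2_pos hx0 hx1 ht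
  rw [kd, hsq]
  generalize Real.sqrt (1-t^2) = a at *
  generalize Real.sqrt (1-x*t^2) = b at *
  field_simp
  have h2' : 1 - t^2*x ≠ 0 := by rw [mul_comm]; exact h2.ne'
  rw [e1, e2, div_eq_iff h2']
  ring

lemma hasDerivAt_ef : HasDerivAt (fun y => ef y t) (ed x t) x := by
  have h2 : 0 < 1 - x*t^2 := one_sub_mul_pos hx0 hx1 ht.1.le ht.2.le
  have hg : HasDerivAt (fun y : ℝ => 1 - y*t^2) (-t^2) x := by
    simpa using ((hasDerivAt_id x).mul_const (t^2)).const_sub 1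
  have hs : HasDerivAt (fun y : ℝ => Real.sqrt (1 - y*t^2))
      (-t^2 / (2 * Real.sqrt (1 - x*t^2))) x := hg.sqrt h2.ne'
  have := hs.div_const (Real.sqrt (1 - t^2))
  rw [show (fun y => ef y t) = fun y => Real.sqrt (1 - y*t^2) / Real.sqrt (1 - t^2) from rfl]
  refine this.congr_deriv ?_; symm
  rw [ed]; ring

end pointwise

noncomputable def phi (x t : ℝ) : ℝ := (1 - 2*t^2 + x*t^4) * cf x t

section bounds
variable {x t b : ℝ} (hx0 : 0 ≤ x) (hxb : x ≤ b) (hb : b < 1) (ht : t ∈ Ioo (0:ℝ) 1)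
include hx0 hxb hb ht

omit hb in lemma sb_le : Real.sqrt (1 - b) ≤ Real.sqrt (1 - x * t^2) :=
  Real.sqrt_le_sqrt (le_trans (by linarith) (one_sub_mul_le hx0 ht.1.le ht.2.le))

lemma kf_bound : |kf x t| ≤ (1 / Real.sqrt (1-b)) * J t := by
  have hx1 : x < 1 := lt_of_le_of_lt hxb hb
  have h1 := one_sub_sq_pos ht
  have h2 := one_sub_mul_pos hx0 hx1 ht.1.le ht.2.le
  have p1 := s1_pos ht
  have pb : 0 < Real.sqrt (1-b) := Real.sqrt_pos.2 (by linarith)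
  rw [kf, Real.sqrt_mul h1.le, abs_of_nonneg (by positivity), J,
    div_mul_div_comm, one_mul]
  refine div_le_div₀ zero_le_one le_rfl (by positivity) ?_
  calc Real.sqrt (1-b) * Real.sqrt (1-t^2)
      = Real.sqrt (1-t^2) * Real.sqrt (1-b) := by ring
    _ ≤ Real.sqrt (1-t^2) * Real.sqrt (1-x*t^2) :=
        mul_le_mul_of_nonneg_left (sb_le hx0 hxb ht) p1.le

lemma ef_bound : |ef x t| ≤ 1 * J t := by
  have h1 := one_sub_sq_pos ht
  have p1 := s1_pos ht
  have hs2 : Real.sqrt (1 - x*t^2) ≤ 1 :=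
    Real.sqrt_le_one.2 (by nlinarith [mul_nonneg hx0 (sq_nonneg t)])
  rw [ef, abs_of_nonneg (by positivity), J, one_mul]
  exact div_le_div₀ zero_le_one hs2 p1 le_rfl

lemma kd_bound : |kd x t| ≤ (1 / (2 * (1-b) * Real.sqrt (1-b))) * J t := by
  have hx1 : x < 1 := lt_of_le_of_lt hxb hb
  have h1 := one_sub_sq_pos ht
  have h2 := one_sub_mul_pos hx0 hx1 ht.1.le ht.2.le
  have hle : 1 - b ≤ 1 - x*t^2 := le_trans (by linarith)
    (one_sub_mul_le hx0 ht.1.le ht.2.le)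
  have p1 := s1_pos ht
  have pb : 0 < Real.sqrt (1-b) := Real.sqrt_pos.2 (by linarith)
  have hb' : (0:ℝ) < 1 - b := by linarith
  have ht2 : t^2 ≤ 1 := by nlinarith [ht.1, ht.2]
  rw [kd, abs_of_nonneg (by positivity), J, div_mul_div_comm, one_mul]
  refine div_le_div₀ zero_le_one ht2 (by positivity) ?_
  calc 2 * (1-b) * Real.sqrt (1-b) * Real.sqrt (1-t^2)
      ≤ 2 * (1-x*t^2) * Real.sqrt (1-x*t^2) * Real.sqrt (1-t^2) := by
        have := sb_le hx0 hxb ht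
        have := mul_le_mul (by nlinarith : 2*(1-b) ≤ 2*(1-x*t^2)) this pb.le (by positivity)
        exact mul_le_mul_of_nonneg_right this p1.le
    _ = 2 * Real.sqrt (1-t^2) * ((1-x*t^2) * Real.sqrt (1-x*t^2)) := by ring

lemma ed_bound : |ed x t| ≤ (1 / (2 * Real.sqrt (1-b))) * J t := by
  have hx1 : x < 1 := lt_of_le_of_lt hxb hb
  have h1 := one_sub_sq_pos ht
  have h2 := one_sub_mul_pos hx0 hx1 ht.1.le ht.2.le
  have p1 := s1_pos ht
  have pb : 0 < Real.sqrt (1-b) := Real.sqrt_pos.2 (by linarith)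
  have ht2 : t^2 ≤ 1 := by nlinarith [ht.1, ht.2]
  have : ed x t = -(t^2 / (2 * Real.sqrt (1-x*t^2) * Real.sqrt (1-t^2))) := by
    rw [ed]; ring
  rw [this, abs_neg, abs_of_nonneg (by positivity), J, div_mul_div_comm, one_mul]
  refine div_le_div₀ zero_le_one ht2 (by positivity) ?_
  calc 2 * Real.sqrt (1-b) * Real.sqrt (1-t^2)
      ≤ 2 * Real.sqrt (1-x*t^2) * Real.sqrt (1-t^2) := by
        exact mul_le_mul_of_nonneg_right
          (mul_le_mul_of_nonneg_left (sb_le hx0 hxb ht) (by norm_num)) p1.le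
    _ = _ := by ring

lemma cf_bound : |cf x t| ≤ (1 / ((1-b) * Real.sqrt (1-b))) * J t := by
  have hx1 : x < 1 := lt_of_le_of_lt hxb hb
  have h1 := one_sub_sq_pos ht
  have h2 := one_sub_mul_pos hx0 hx1 ht.1.le ht.2.le
  have hle : 1 - b ≤ 1 - x*t^2 := le_trans (by linarith)
    (one_sub_mul_le hx0 ht.1.le ht.2.le)
  have p1 := s1_pos ht
  have pb : 0 < Real.sqrt (1-b) := Real.sqrt_pos.2 (by linarith)
  have hb' : (0:ℝ) < 1 - b := by linarith
  rw [cf, abs_of_nonneg (by positivity), J, div_mul_div_comm, one_mul]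
  refine div_le_div₀ zero_le_one le_rfl (by positivity) ?_
  calc (1-b) * Real.sqrt (1-b) * Real.sqrt (1-t^2)
      ≤ (1-x*t^2) * Real.sqrt (1-x*t^2) * Real.sqrt (1-t^2) := by
        exact mul_le_mul_of_nonneg_right
          (mul_le_mul hle (sb_le hx0 hxb ht) pb.le h2.le) p1.le
    _ = Real.sqrt (1-t^2) * ((1-x*t^2) * Real.sqrt (1-x*t^2)) := by ring

lemma phi_bound (hx1' : x ≤ 1) :
    |phi x t| ≤ (4 / ((1-b) * Real.sqrt (1-b))) * J t := by
  have ht2 : t^2 ≤ 1 := by nlinarith [ht.1, ht.2]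
  have ht4 : t^4 ≤ 1 := by nlinarith [sq_nonneg t]
  have hxt0 : 0 ≤ x * t^4 := mul_nonneg hx0 (by positivity)
  have hxt1 : x * t^4 ≤ 1 := by nlinarith
  have habs : |1 - 2*t^2 + x*t^4| ≤ 4 := by
    rw [abs_le]; constructor <;> nlinarith [ht.1.le, sq_nonneg t]
  calc |phi x t| = |1 - 2*t^2 + x*t^4| * |cf x t| := by rw [phi, abs_mul]
    _ ≤ 4 * ((1 / ((1-b) * Real.sqrt (1-b))) * J t) := by
        apply mul_le_mul habs (cf_bound hx0 hxb hb ht) (abs_nonneg _) (by norm_num)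
    _ = (4 / ((1-b) * Real.sqrt (1-b))) * J t := by ring

end bounds

section integrable
variable {x : ℝ} (hx0 : 0 ≤ x) (hx1 : x < 1)
include hx0 hx1

lemma intInt_kf : IntervalIntegrable (kf x) volume 0 1 :=
  intInt_of_bound (by unfold kf; fun_prop) (fun t ht => kf_bound hx0 le_rfl hx1 ht)

lemma intInt_ef : IntervalIntegrable (ef x) volume 0 1 :=
  intInt_of_bound (by unfold ef; fun_prop) (fun t ht => ef_bound hx0 le_rfl hx1 ht)

lemma intInt_kd : IntervalIntegrable (kd x) volume 0 1 :=
  intInt_of_bound (by unfold kd; fun_prop) (fun t ht => kd_bound hx0 le_rfl hx1 ht)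

lemma intInt_ed : IntervalIntegrable (ed x) volume 0 1 :=
  intInt_of_bound (by unfold ed; fun_prop) (fun t ht => ed_bound hx0 le_rfl hx1 ht)

lemma intInt_cf : IntervalIntegrable (cf x) volume 0 1 :=
  intInt_of_bound (by unfold cf; fun_prop) (fun t ht => cf_bound hx0 le_rfl hx1 ht)

lemma intInt_phi : IntervalIntegrable (phi x) volume 0 1 :=
  intInt_of_bound (by unfold phi cf; fun_prop)
    (fun t ht => phi_bound hx0 le_rfl hx1 ht hx1.le)

end integrable

lemma ae_ne_one : ∀ᵐ (t : ℝ), t ≠ 1 := by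
  rw [ae_iff]
  simp only [not_not, Set.setOf_eq_eq_singleton]
  exact Real.volume_singleton

lemma mem_Ioo_of_Ioc {t : ℝ} (ht : t ∈ Ι (0:ℝ) 1) (hne : t ≠ 1) : t ∈ Ioo (0:ℝ) 1 := by
  rw [Set.uIoc_of_le (by norm_num : (0:ℝ) ≤ 1)] at ht
  exact ⟨ht.1, lt_of_le_of_ne ht.2 hne⟩

lemma ball_props {x : ℝ} (hx0 : 0 < x) (hx1 : x < 1) :
    0 < min x (1-x) / 2 ∧ x + min x (1-x) / 2 < 1 ∧
    ∀ y ∈ Metric.ball x (min x (1-x) / 2), 0 ≤ y ∧ y ≤ x + min x (1-x) / 2 := by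
  have h1 : min x (1-x) / 2 ≤ x / 2 := by
    have := min_le_left x (1-x); linarith
  have h2 : min x (1-x) / 2 ≤ (1-x) / 2 := by
    have := min_le_right x (1-x); linarith
  refine ⟨by have := lt_min hx0 (by linarith : (0:ℝ) < 1-x); linarith, by linarith, fun y hy => ?_⟩
  rw [Metric.mem_ball, Real.dist_eq, abs_lt] at hy
  constructor <;> linarith [hy.1, hy.2]

lemma hasDerivAt_Kell {x : ℝ} (hx : x ∈ Ioo (0:ℝ) 1) :
    HasDerivAt Kell (∫ t in (0:ℝ)..1, kd x t) x := by
  obtain ⟨hx0, hx1⟩ := hx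
  obtain ⟨hε0, hb1, hball⟩ := ball_props hx0 hx1
  set ε := min x (1-x) / 2
  set b := x + ε with hbdef
  have hb0 : (0:ℝ) < 1 - b := by linarith
  have key := intervalIntegral.hasDerivAt_integral_of_dominated_loc_of_deriv_le
    (F := fun y t => kf y t) (F' := fun y t => kd y t)
    (bound := fun t => (1 / (2 * (1-b) * Real.sqrt (1-b))) * J t)
    (a := 0) (b := 1) (x₀ := x) (μ := volume) (Metric.ball_mem_nhds x hε0)
    (Filter.Eventually.of_forall fun y =>
      (Measurable.aestronglyMeasurable (by unfold kf; fun_prop)))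
    (intInt_kf hx0.le hx1)
    (Measurable.aestronglyMeasurable (by unfold kd; fun_prop))
    ?_ (intInt_J.const_mul _) ?_
  · exact (show Kell = fun y => ∫ t in (0:ℝ)..1, kf y t from rfl) ▸ key.2
  · filter_upwards [ae_ne_one] with t hne ht y hy
    have ht' := mem_Ioo_of_Ioc ht hne
    obtain ⟨hy0, hyb⟩ := hball y hy
    exact (Real.norm_eq_abs _) ▸ kd_bound hy0 hyb hb1 ht'
  · filter_upwards [ae_ne_one] with t hne ht y hy
    have ht' := mem_Ioo_of_Ioc ht hne
    obtain ⟨hy0, hyb⟩ := hball y hy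
    exact hasDerivAt_kf hy0 (lt_of_le_of_lt hyb hb1) ht'

lemma hasDerivAt_Eell {x : ℝ} (hx : x ∈ Ioo (0:ℝ) 1) :
    HasDerivAt Eell (∫ t in (0:ℝ)..1, ed x t) x := by
  obtain ⟨hx0, hx1⟩ := hx
  obtain ⟨hε0, hb1, hball⟩ := ball_props hx0 hx1
  set ε := min x (1-x) / 2
  set b := x + ε with hbdef
  have hb0 : (0:ℝ) < 1 - b := by linarith
  have key := intervalIntegral.hasDerivAt_integral_of_dominated_loc_of_deriv_le
    (F := fun y t => ef y t) (F' := fun y t => ed y t)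
    (bound := fun t => (1 / (2 * Real.sqrt (1-b))) * J t)
    (a := 0) (b := 1) (x₀ := x) (μ := volume) (Metric.ball_mem_nhds x hε0)
    (Filter.Eventually.of_forall fun y =>
      (Measurable.aestronglyMeasurable (by unfold ef; fun_prop)))
    (intInt_ef hx0.le hx1)
    (Measurable.aestronglyMeasurable (by unfold ed; fun_prop))
    ?_ (intInt_J.const_mul _) ?_
  · exact (show Eell = fun y => ∫ t in (0:ℝ)..1, ef y t from rfl) ▸ key.2
  · filter_upwards [ae_ne_one] with t hne ht y hy
    have ht' := mem_Ioo_of_Ioc ht hne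
    obtain ⟨hy0, hyb⟩ := hball y hy
    exact (Real.norm_eq_abs _) ▸ ed_bound hy0 hyb hb1 ht'
  · filter_upwards [ae_ne_one] with t hne ht y hy
    have ht' := mem_Ioo_of_Ioc ht hne
    obtain ⟨hy0, hyb⟩ := hball y hy
    exact hasDerivAt_ef hy0 (lt_of_le_of_lt hyb hb1) ht'

lemma hasDerivAt_ftcf {x t : ℝ} (hx0 : 0 ≤ x) (hx1 : x < 1) (ht : t ∈ Ioo (0:ℝ) 1) :
    HasDerivAt (fun u => u * Real.sqrt (1-u^2) / Real.sqrt (1-x*u^2)) (phi x t) t := by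
  have h1 : 0 < 1 - t^2 := one_sub_sq_pos ht
  have h2 : 0 < 1 - x*t^2 := one_sub_mul_pos hx0 hx1 ht.1.le ht.2.le
  have p1 := s1_pos ht
  have p2 : 0 < Real.sqrt (1 - x*t^2) := Real.sqrt_pos.2 h2
  have hd1 : HasDerivAt (fun u : ℝ => 1 - u^2) (-(2*t)) t := by
    simpa using (hasDerivAt_pow 2 t).const_sub 1
  have hs1 : HasDerivAt (fun u : ℝ => Real.sqrt (1-u^2))
      (-(2*t) / (2 * Real.sqrt (1-t^2))) t := hd1.sqrt h1.ne'
  have hd2 : HasDerivAt (fun u : ℝ => 1 - x*u^2) (-(x*(2*t))) t := by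
    simpa [mul_comm] using ((hasDerivAt_pow 2 t).const_mul x).const_sub 1
  have hs2 : HasDerivAt (fun u : ℝ => Real.sqrt (1-x*u^2))
      (-(x*(2*t)) / (2 * Real.sqrt (1-x*t^2))) t := hd2.sqrt h2.ne'
  have hnum : HasDerivAt (fun u : ℝ => u * Real.sqrt (1-u^2))
      (1 * Real.sqrt (1-t^2) + t * (-(2*t) / (2 * Real.sqrt (1-t^2)))) t :=
    (hasDerivAt_id t).mul hs1
  have hdiv := hnum.div hs2 p2.ne'
  refine hdiv.congr_deriv ?_; symm
  have e1 : Real.sqrt (1-t^2) ^ 2 = 1 - t^2 := Real.sq_sqrt h1.le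
  have e2 : Real.sqrt (1-x*t^2) ^ 2 = 1 - x*t^2 := Real.sq_sqrt h2.le
  rw [phi, cf]
  generalize Real.sqrt (1-t^2) = a at *
  generalize Real.sqrt (1-x*t^2) = b at *
  field_simp
  have h2' : 1 - t^2*x ≠ 0 := by rw [mul_comm]; exact h2.ne'
  rw [e1, e2, div_eq_iff h2']
  ring

lemma tendsto_ftcf_zero {x : ℝ} (hx0 : 0 ≤ x) (hx1 : x < 1) :
    Tendsto (fun u => u * Real.sqrt (1-u^2) / Real.sqrt (1-x*u^2)) (nhdsWithin 0 (Ioi 0))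
      (nhds 0) := by
  have hc : ContinuousAt (fun u : ℝ => u * Real.sqrt (1-u^2) / Real.sqrt (1-x*u^2)) 0 := by
    apply ContinuousAt.div
    · exact (continuous_id.mul (Real.continuous_sqrt.comp (by continuity))).continuousAt
    · exact (Real.continuous_sqrt.comp (by continuity)).continuousAt
    · simp
  simpa using hc.tendsto.mono_left (nhdsWithin_le_nhds : 𝓝[>] (0:ℝ) ≤ 𝓝 0)

lemma tendsto_ftcf_one {x : ℝ} (hx0 : 0 ≤ x) (hx1 : x < 1) :
    Tendsto (fun u => u * Real.sqrt (1-u^2) / Real.sqrt (1-x*u^2)) (nhdsWithin 1 (Iio 1))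
      (nhds 0) := by
  have hc : ContinuousAt (fun u : ℝ => u * Real.sqrt (1-u^2) / Real.sqrt (1-x*u^2)) 1 := by
    apply ContinuousAt.div
    · exact (continuous_id.mul (Real.continuous_sqrt.comp (by continuity))).continuousAt
    · exact (Real.continuous_sqrt.comp (by continuity)).continuousAt
    · simp only [one_pow, mul_one]
      exact (Real.sqrt_pos.2 (by linarith)).ne'
  simpa using hc.tendsto.mono_left (nhdsWithin_le_nhds : 𝓝[<] (1:ℝ) ≤ 𝓝 1)

lemma integral_phi_eq_zero {x : ℝ} (hx0 : 0 ≤ x) (hx1 : x < 1) :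
    ∫ t in (0:ℝ)..1, phi x t = 0 := by
  have h := integral_eq_sub_of_hasDerivAt_of_tendsto (a := 0) (b := 1)
    (f := fun u => u * Real.sqrt (1-u^2) / Real.sqrt (1-x*u^2)) (f' := phi x)
    one_pos (fun t ht => hasDerivAt_ftcf hx0 hx1 ht) (intInt_phi hx0 hx1)
    (tendsto_ftcf_zero hx0 hx1) (tendsto_ftcf_one hx0 hx1)
  simpa using h

lemma integral_cf_eq {x : ℝ} (hx0 : 0 ≤ x) (hx1 : x < 1) :
    (1 - x) * ∫ t in (0:ℝ)..1, cf x t = Eell x := by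
  have hpt : ∀ᵐ t, t ∈ Ι (0:ℝ) 1 →
      (1-x) * cf x t - ef x t = (-x) * phi x t := by
    filter_upwards [ae_ne_one] with t hne ht
    have ht' := mem_Ioo_of_Ioc ht hne
    have h1 := one_sub_sq_pos ht'
    have h2 := one_sub_mul_pos hx0 hx1 ht'.1.le ht'.2.le
    have p1 := s1_pos ht'
    have p2 : 0 < Real.sqrt (1 - x*t^2) := Real.sqrt_pos.2 h2
    have e1 : Real.sqrt (1-t^2) ^ 2 = 1 - t^2 := Real.sq_sqrt h1.le
    have e2 : Real.sqrt (1-x*t^2) ^ 2 = 1 - x*t^2 := Real.sq_sqrt h2.le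
    rw [cf, ef, phi, cf]
    generalize Real.sqrt (1-t^2) = a at *
    generalize Real.sqrt (1-x*t^2) = b at *
    field_simp
    linear_combination (-(1-x*t^2)) * e2
  have hint : ∫ t in (0:ℝ)..1, ((1-x) * cf x t - ef x t)
      = ∫ t in (0:ℝ)..1, (-x) * phi x t := by
    apply intervalIntegral.integral_congr_ae
    filter_upwards [hpt] with t h ht using h ht
  rw [intervalIntegral.integral_sub ((intInt_cf hx0 hx1).const_mul (1-x)) (intInt_ef hx0 hx1),
    intervalIntegral.integral_const_mul, intervalIntegral.integral_const_mul,
    integral_phi_eq_zero hx0 hx1] at hint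
  have : Eell x = ∫ t in (0:ℝ)..1, ef x t := rfl
  rw [this]
  linarith [hint]

lemma integral_kd_eq {x : ℝ} (hx : x ∈ Ioo (0:ℝ) 1) :
    ∫ t in (0:ℝ)..1, kd x t = (Eell x - (1-x) * Kell x) / (2*x*(1-x)) := by
  obtain ⟨hx0, hx1⟩ := hx
  have hpt : ∀ᵐ t, t ∈ Ι (0:ℝ) 1 → kd x t = (1/(2*x)) * (cf x t - kf x t) := by
    filter_upwards [ae_ne_one] with t hne ht
    have ht' := mem_Ioo_of_Ioc ht hne
    have h1 := one_sub_sq_pos ht'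
    have h2 := one_sub_mul_pos hx0.le hx1 ht'.1.le ht'.2.le
    have p1 := s1_pos ht'
    have p2 : 0 < Real.sqrt (1 - x*t^2) := Real.sqrt_pos.2 h2
    have e1 : Real.sqrt (1-t^2) ^ 2 = 1 - t^2 := Real.sq_sqrt h1.le
    have e2 : Real.sqrt (1-x*t^2) ^ 2 = 1 - x*t^2 := Real.sq_sqrt h2.le
    rw [kd, cf, kf, Real.sqrt_mul h1.le]
    generalize Real.sqrt (1-t^2) = a at *
    generalize Real.sqrt (1-x*t^2) = b at *
    field_simp
    have h2' : 1 - t^2*x ≠ 0 := by rw [mul_comm]; exact h2.ne'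
    rw [div_sub_one h2']
    ring
  have hint : ∫ t in (0:ℝ)..1, kd x t
      = ∫ t in (0:ℝ)..1, (1/(2*x)) * (cf x t - kf x t) := by
    apply intervalIntegral.integral_congr_ae
    filter_upwards [hpt] with t h ht using h ht
  rw [hint, intervalIntegral.integral_const_mul,
    intervalIntegral.integral_sub (intInt_cf hx0.le hx1) (intInt_kf hx0.le hx1)]
  have hcf := integral_cf_eq hx0.le hx1
  have hK : Kell x = ∫ t in (0:ℝ)..1, kf x t := rfl
  rw [← hK]
  have hx1' : (0:ℝ) < 1 - x := by linarith
  field_simp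
  linear_combination hcf

lemma integral_ed_eq {x : ℝ} (hx : x ∈ Ioo (0:ℝ) 1) :
    ∫ t in (0:ℝ)..1, ed x t = (Eell x - Kell x) / (2*x) := by
  obtain ⟨hx0, hx1⟩ := hx
  have hpt : ∀ᵐ t, t ∈ Ι (0:ℝ) 1 → ed x t = (1/(2*x)) * (ef x t - kf x t) := by
    filter_upwards [ae_ne_one] with t hne ht
    have ht' := mem_Ioo_of_Ioc ht hne
    have h1 := one_sub_sq_pos ht'
    have h2 := one_sub_mul_pos hx0.le hx1 ht'.1.le ht'.2.le
    have p1 := s1_pos ht'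
    have p2 : 0 < Real.sqrt (1 - x*t^2) := Real.sqrt_pos.2 h2
    have e1 : Real.sqrt (1-t^2) ^ 2 = 1 - t^2 := Real.sq_sqrt h1.le
    have e2 : Real.sqrt (1-x*t^2) ^ 2 = 1 - x*t^2 := Real.sq_sqrt h2.le
    rw [ed, ef, kf, Real.sqrt_mul h1.le]
    generalize Real.sqrt (1-t^2) = a at *
    generalize Real.sqrt (1-x*t^2) = b at *
    field_simp
    linear_combination (-1) * e2
  have hint : ∫ t in (0:ℝ)..1, ed x t
      = ∫ t in (0:ℝ)..1, (1/(2*x)) * (ef x t - kf x t) := by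
    apply intervalIntegral.integral_congr_ae
    filter_upwards [hpt] with t h ht using h ht
  rw [hint, intervalIntegral.integral_const_mul,
    intervalIntegral.integral_sub (intInt_ef hx0.le hx1) (intInt_kf hx0.le hx1)]
  have hE : Eell x = ∫ t in (0:ℝ)..1, ef x t := rfl
  have hK : Kell x = ∫ t in (0:ℝ)..1, kf x t := rfl
  rw [← hE, ← hK]
  field_simp

lemma ae_ne (c : ℝ) : ∀ᵐ (t : ℝ), t ≠ c := by
  rw [ae_iff]
  simp only [not_not, Set.setOf_eq_eq_singleton]
  exact Real.volume_singleton

lemma int_mono {f g : ℝ → ℝ} (hf : IntervalIntegrable f volume 0 1)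
    (hg : IntervalIntegrable g volume 0 1) (h : ∀ t ∈ Ioo (0:ℝ) 1, f t ≤ g t) :
    (∫ t in (0:ℝ)..1, f t) ≤ ∫ t in (0:ℝ)..1, g t := by
  refine intervalIntegral.integral_mono_ae_restrict (by norm_num) hf hg ?_
  rw [Filter.EventuallyLE, ae_restrict_iff' measurableSet_Icc]
  filter_upwards [ae_ne 0, ae_ne 1] with t h0 h1 ht
  exact h t ⟨lt_of_le_of_ne ht.1 (Ne.symm h0), lt_of_le_of_ne ht.2 h1⟩

lemma intInt_constJ (c : ℝ) : IntervalIntegrable (fun t => c * J t) volume 0 1 :=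
  intInt_J.const_mul c

lemma integral_constJ (c : ℝ) : ∫ t in (0:ℝ)..1, c * J t = c * (π/2) := by
  rw [intervalIntegral.integral_const_mul, integral_J]

section Kbounds
variable {x : ℝ} (hx0 : 0 ≤ x) (hx1 : x < 1)
include hx0 hx1

lemma Kell_ge : π/2 ≤ Kell x := by
  have h : ∀ t ∈ Ioo (0:ℝ) 1, J t ≤ kf x t := by
    intro t ht
    have h1 := one_sub_sq_pos ht
    have h2 := one_sub_mul_pos hx0 hx1 ht.1.le ht.2.le
    have p1 := s1_pos ht
    have p2 : 0 < Real.sqrt (1-x*t^2) := Real.sqrt_pos.2 h2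
    have hs2 : Real.sqrt (1 - x*t^2) ≤ 1 :=
      Real.sqrt_le_one.2 (by nlinarith [mul_nonneg hx0 (sq_nonneg t)])
    rw [J, kf, Real.sqrt_mul h1.le]
    refine div_le_div₀ zero_le_one le_rfl (by positivity) ?_
    calc Real.sqrt (1-t^2) * Real.sqrt (1-x*t^2) ≤ Real.sqrt (1-t^2) * 1 :=
          mul_le_mul_of_nonneg_left hs2 p1.le
      _ = Real.sqrt (1-t^2) := mul_one _
  have := int_mono intInt_J (intInt_kf hx0 hx1) h
  rwa [integral_J] at this

lemma Kell_pos : 0 < Kell x := lt_of_lt_of_le (by positivity) (Kell_ge hx0 hx1)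

lemma Kell_le : Kell x ≤ (1 / Real.sqrt (1-x)) * (π/2) := by
  have h : ∀ t ∈ Ioo (0:ℝ) 1, kf x t ≤ (1 / Real.sqrt (1-x)) * J t := fun t ht =>
    (le_abs_self _).trans (kf_bound hx0 le_rfl hx1 ht)
  have := int_mono (intInt_kf hx0 hx1) (intInt_constJ _) h
  rwa [integral_constJ] at this

lemma Eell_le : Eell x ≤ π/2 := by
  have h : ∀ t ∈ Ioo (0:ℝ) 1, ef x t ≤ 1 * J t := fun t ht =>
    (le_abs_self _).trans (ef_bound hx0 le_rfl hx1 ht)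
  have := int_mono (intInt_ef hx0 hx1) (intInt_constJ 1) h
  rwa [integral_constJ, one_mul] at this

lemma Eell_ge : Real.sqrt (1-x) * (π/2) ≤ Eell x := by
  have h : ∀ t ∈ Ioo (0:ℝ) 1, Real.sqrt (1-x) * J t ≤ ef x t := by
    intro t ht
    have p1 := s1_pos ht
    rw [J, ef, mul_one_div]
    exact div_le_div₀ (Real.sqrt_nonneg _) (sb_le hx0 le_rfl ht) p1 le_rfl
  have := int_mono (intInt_constJ _) (intInt_ef hx0 hx1) h
  rwa [integral_constJ] at this

lemma ef_sub_kf {t : ℝ} (ht : t ∈ Ioo (0:ℝ) 1) :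
    ef x t - kf x t = -(x*t^2) / (Real.sqrt (1-t^2) * Real.sqrt (1-x*t^2)) := by
  have h1 := one_sub_sq_pos ht
  have h2 := one_sub_mul_pos hx0 hx1 ht.1.le ht.2.le
  have p1 := s1_pos ht
  have p2 : 0 < Real.sqrt (1-x*t^2) := Real.sqrt_pos.2 h2
  have e2 : Real.sqrt (1-x*t^2) ^ 2 = 1 - x*t^2 := Real.sq_sqrt h2.le
  rw [ef, kf, Real.sqrt_mul h1.le]
  field_simp
  linear_combination e2

lemma EsubK_nonpos : Eell x - Kell x ≤ 0 := by
  have h : ∀ t ∈ Ioo (0:ℝ) 1, ef x t ≤ kf x t := by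
    intro t ht
    have h1 := one_sub_sq_pos ht
    have h2 := one_sub_mul_pos hx0 hx1 ht.1.le ht.2.le
    have p1 := s1_pos ht
    have p2 : 0 < Real.sqrt (1-x*t^2) := Real.sqrt_pos.2 h2
    have heq := ef_sub_kf hx0 hx1 ht
    have hnn : 0 ≤ (x*t^2) / (Real.sqrt (1-t^2) * Real.sqrt (1-x*t^2)) := by positivity
    have hneg : -(x*t^2) / (Real.sqrt (1-t^2) * Real.sqrt (1-x*t^2)) ≤ 0 := by
      rw [neg_div]; linarith
    linarith [heq, hneg]
  have heq := int_mono (intInt_ef hx0 hx1) (intInt_kf hx0 hx1) h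
  have hE : Eell x = ∫ t in (0:ℝ)..1, ef x t := rfl
  have hK : Kell x = ∫ t in (0:ℝ)..1, kf x t := rfl
  rw [hE, hK]; linarith

lemma EsubK_lower : -((x / Real.sqrt (1-x)) * (π/2)) ≤ Eell x - Kell x := by
  have h : ∀ t ∈ Ioo (0:ℝ) 1, -(x / Real.sqrt (1-x)) * J t ≤ ef x t - kf x t := by
    intro t ht
    have h1 := one_sub_sq_pos ht
    have h2 := one_sub_mul_pos hx0 hx1 ht.1.le ht.2.le
    have p1 := s1_pos ht
    have p2 : 0 < Real.sqrt (1-x*t^2) := Real.sqrt_pos.2 h2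
    have pb : 0 < Real.sqrt (1-x) := Real.sqrt_pos.2 (by linarith)
    have ht2 : t^2 ≤ 1 := by nlinarith [ht.1, ht.2]
    rw [ef_sub_kf hx0 hx1 ht, J, mul_one_div, neg_div, div_div, neg_div, neg_le_neg_iff]
    refine div_le_div₀ (by positivity) (by nlinarith) (by positivity) ?_
    calc Real.sqrt (1-x) * Real.sqrt (1-t^2)
        = Real.sqrt (1-t^2) * Real.sqrt (1-x) := by ring
      _ ≤ Real.sqrt (1-t^2) * Real.sqrt (1-x*t^2) :=
          mul_le_mul_of_nonneg_left (sb_le hx0 le_rfl ht) p1.le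
  have hsub : IntervalIntegrable (fun t => ef x t - kf x t) volume 0 1 :=
    (intInt_ef hx0 hx1).sub (intInt_kf hx0 hx1)
  have := int_mono (intInt_constJ _) hsub h
  rw [integral_constJ, intervalIntegral.integral_sub (intInt_ef hx0 hx1)
    (intInt_kf hx0 hx1)] at this
  have hE : Eell x = ∫ t in (0:ℝ)..1, ef x t := rfl
  have hK : Kell x = ∫ t in (0:ℝ)..1, kf x t := rfl
  rw [hE, hK]; linarith

end Kbounds

section K1bounds
variable {x : ℝ} (hx0 : 0 < x) (hx1 : x < 1)
include hx0 hx1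

lemma Kell1_le : Kell (1-x) ≤ (1 / Real.sqrt x) * (π/2) := by
  have h : ∀ t ∈ Ioo (0:ℝ) 1, kf (1-x) t ≤ (1 / Real.sqrt x) * J t := by
    intro t ht
    have h1 := one_sub_sq_pos ht
    have h2 : 0 < 1 - (1-x)*t^2 :=
      one_sub_mul_pos (by linarith) (by linarith) ht.1.le ht.2.le
    have p1 := s1_pos ht
    have hxle : Real.sqrt x ≤ Real.sqrt (1 - (1-x)*t^2) := by
      apply Real.sqrt_le_sqrt
      have := one_sub_mul_le (by linarith : (0:ℝ) ≤ 1-x) ht.1.le ht.2.le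
      linarith
    rw [kf, Real.sqrt_mul h1.le, J, mul_one_div, div_div]
    refine div_le_div₀ zero_le_one le_rfl (by positivity) ?_
    calc Real.sqrt x * Real.sqrt (1-t^2) = Real.sqrt (1-t^2) * Real.sqrt x := by ring
      _ ≤ Real.sqrt (1-t^2) * Real.sqrt (1 - (1-x)*t^2) :=
          mul_le_mul_of_nonneg_left hxle p1.le
  have := int_mono (intInt_kf (by linarith) (by linarith)) (intInt_constJ _) h
  rwa [integral_constJ] at this

lemma Eell1_ge : 1 ≤ Eell (1-x) := by
  have h : ∀ t ∈ Ioo (0:ℝ) 1, (1:ℝ) ≤ ef (1-x) t := by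
    intro t ht
    have h1 := one_sub_sq_pos ht
    have p1 := s1_pos ht
    rw [ef]
    rw [le_div_iff₀ p1, one_mul]
    apply Real.sqrt_le_sqrt
    nlinarith [sq_nonneg t]
  have hone : ∫ t in (0:ℝ)..1, (1:ℝ) = 1 := by simp
  have := int_mono intervalIntegrable_const (intInt_ef (by linarith) (by linarith)) h
  rw [hone] at this
  exact this

lemma Eell1_le : Eell (1-x) ≤ 1 + Real.sqrt x * (π/2) := by
  have h : ∀ t ∈ Ioo (0:ℝ) 1, ef (1-x) t ≤ 1 + Real.sqrt x * J t := by
    intro t ht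
    have h1 := one_sub_sq_pos ht
    have h2 : 0 < 1 - (1-x)*t^2 :=
      one_sub_mul_pos (by linarith) (by linarith) ht.1.le ht.2.le
    have p1 := s1_pos ht
    have hkey : Real.sqrt (1 - (1-x)*t^2) ≤ Real.sqrt (1-t^2) + Real.sqrt x := by
      have hstep : Real.sqrt (1 - (1-x)*t^2)
          ≤ Real.sqrt (1-t^2) + Real.sqrt x * t := by
        have hsq : 1 - (1-x)*t^2 ≤ (Real.sqrt (1-t^2) + Real.sqrt x * t)^2 := by
          have e1 : Real.sqrt (1-t^2) ^ 2 = 1 - t^2 := Real.sq_sqrt h1.le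
          have e2 : Real.sqrt x ^ 2 = x := Real.sq_sqrt hx0.le
          nlinarith [mul_nonneg (Real.sqrt_nonneg (1-t^2))
            (mul_nonneg (Real.sqrt_nonneg x) ht.1.le)]
        calc Real.sqrt (1 - (1-x)*t^2) ≤ Real.sqrt ((Real.sqrt (1-t^2) + Real.sqrt x * t)^2) :=
              Real.sqrt_le_sqrt hsq
          _ = Real.sqrt (1-t^2) + Real.sqrt x * t := Real.sqrt_sq
              (add_nonneg (Real.sqrt_nonneg _) (mul_nonneg (Real.sqrt_nonneg _) ht.1.le))
      have : Real.sqrt x * t ≤ Real.sqrt x :=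
        mul_le_of_le_one_right (Real.sqrt_nonneg x) ht.2.le
      linarith
    rw [ef, J, mul_one_div, div_le_iff₀ p1, add_mul, div_mul_cancel₀ _ p1.ne', one_mul]
    linarith
  have hrhs : IntervalIntegrable (fun t => 1 + Real.sqrt x * J t) volume 0 1 :=
    intervalIntegrable_const.add (intInt_constJ _)
  have := int_mono (intInt_ef (by linarith) (by linarith)) hrhs h
  rw [intervalIntegral.integral_add intervalIntegrable_const (intInt_constJ _),
    intervalIntegral.integral_const_mul, integral_J] at this
  have hE : Eell (1-x) = ∫ t in (0:ℝ)..1, ef (1-x) t := rfl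
  rw [hE]
  simpa using this

end K1bounds

/-! Limits as x → 0+ -/

lemma hev0 : ∀ᶠ y in 𝓝[>] (0:ℝ), y ∈ Ioo (0:ℝ) 1 :=
  Ioo_mem_nhdsGT_of_mem (by norm_num : (0:ℝ) ∈ Ico (0:ℝ) 1)

lemma tendsto_Kell0 : Tendsto Kell (𝓝[>] (0:ℝ)) (𝓝 (π/2)) := by
  refine tendsto_of_tendsto_of_tendsto_of_le_of_le'
    (g := fun _ => π/2) (h := fun y => (1 / Real.sqrt (1-y)) * (π/2))
    tendsto_const_nhds ?_ ?_ ?_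
  · have hc : ContinuousAt (fun y : ℝ => (1 / Real.sqrt (1-y)) * (π/2)) 0 := by
      apply ContinuousAt.mul _ continuousAt_const
      apply ContinuousAt.div continuousAt_const
      · exact (Real.continuous_sqrt.comp (by continuity)).continuousAt
      · simp
    have := hc.tendsto.mono_left (nhdsWithin_le_nhds : 𝓝[>] (0:ℝ) ≤ 𝓝 0)
    simpa using this
  · filter_upwards [hev0] with y hy using Kell_ge hy.1.le hy.2
  · filter_upwards [hev0] with y hy using Kell_le hy.1.le hy.2

lemma tendsto_Eell0 : Tendsto Eell (𝓝[>] (0:ℝ)) (𝓝 (π/2)) := by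
  refine tendsto_of_tendsto_of_tendsto_of_le_of_le'
    (g := fun y => Real.sqrt (1-y) * (π/2)) (h := fun _ => π/2)
    ?_ tendsto_const_nhds ?_ ?_
  · have hc : ContinuousAt (fun y : ℝ => Real.sqrt (1-y) * (π/2)) 0 := by
      exact ((Real.continuous_sqrt.comp (by continuity)).continuousAt).mul continuousAt_const
    have := hc.tendsto.mono_left (nhdsWithin_le_nhds : 𝓝[>] (0:ℝ) ≤ 𝓝 0)
    simpa using this
  · filter_upwards [hev0] with y hy using Eell_ge hy.1.le hy.2
  · filter_upwards [hev0] with y hy using Eell_le hy.1.le hy.2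

lemma tendsto_Eell1 : Tendsto (fun y => Eell (1-y)) (𝓝[>] (0:ℝ)) (𝓝 1) := by
  refine tendsto_of_tendsto_of_tendsto_of_le_of_le'
    (g := fun _ => (1:ℝ)) (h := fun y => 1 + Real.sqrt y * (π/2))
    tendsto_const_nhds ?_ ?_ ?_
  · have hc : ContinuousAt (fun y : ℝ => 1 + Real.sqrt y * (π/2)) 0 := by
      exact continuousAt_const.add (Real.continuous_sqrt.continuousAt.mul continuousAt_const)
    have := hc.tendsto.mono_left (nhdsWithin_le_nhds : 𝓝[>] (0:ℝ) ≤ 𝓝 0)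
    simpa using this
  · filter_upwards [hev0] with y hy using Eell1_ge hy.1 hy.2
  · filter_upwards [hev0] with y hy using Eell1_le hy.1 hy.2

lemma tendsto_KEK :
    Tendsto (fun y => Kell (1-y) * (Eell y - Kell y)) (𝓝[>] (0:ℝ)) (𝓝 0) := by
  refine tendsto_of_tendsto_of_tendsto_of_le_of_le'
    (g := fun y : ℝ => -((1 / Real.sqrt y) * (π/2) * ((y / Real.sqrt (1-y)) * (π/2))))
    (h := fun _ => (0:ℝ)) ?_ (tendsto_const_nhds) ?_ ?_
  · -- lower bound function tends to 0
    have hcong : (fun y : ℝ => -(Real.sqrt y / Real.sqrt (1-y) * (π/2*(π/2))))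
        =ᶠ[𝓝[>] (0:ℝ)] (fun y : ℝ =>
          -((1 / Real.sqrt y) * (π/2) * ((y / Real.sqrt (1-y)) * (π/2)))) := by
      filter_upwards [hev0] with y hy
      have hy0 : 0 < y := hy.1
      have hsy : 0 < Real.sqrt y := Real.sqrt_pos.2 hy0
      have hsy1 : 0 < Real.sqrt (1-y) := Real.sqrt_pos.2 (by linarith [hy.2])
      have ey : Real.sqrt y ^ 2 = y := Real.sq_sqrt hy0.le
      field_simp
      linear_combination (-1) * ey
    have hnice : Tendsto (fun y : ℝ => -(Real.sqrt y / Real.sqrt (1-y) * (π/2*(π/2))))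
        (𝓝[>] (0:ℝ)) (𝓝 0) := by
      have hc : ContinuousAt (fun y : ℝ => -(Real.sqrt y / Real.sqrt (1-y) * (π/2*(π/2)))) 0 := by
        apply ContinuousAt.neg
        apply ContinuousAt.mul _ continuousAt_const
        apply ContinuousAt.div Real.continuous_sqrt.continuousAt
          ((Real.continuous_sqrt.comp (by continuity)).continuousAt)
        simp
      have := hc.tendsto.mono_left (nhdsWithin_le_nhds : 𝓝[>] (0:ℝ) ≤ 𝓝 0)
      simpa using this
    exact hnice.congr' hcong
  · -- lower bound holds eventually
    filter_upwards [hev0] with y hy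
    have hy0 := hy.1; have hy1 := hy.2
    have ha0 : 0 ≤ Kell (1-y) := le_trans (by positivity) (Kell_ge (by linarith) (by linarith))
    have haA : Kell (1-y) ≤ (1 / Real.sqrt y) * (π/2) := Kell1_le hy0 hy1
    have hb0 : Eell y - Kell y ≤ 0 := EsubK_nonpos hy0.le hy1
    have hbB : -((y / Real.sqrt (1-y)) * (π/2)) ≤ Eell y - Kell y := EsubK_lower hy0.le hy1
    have hB0 : 0 ≤ (y / Real.sqrt (1-y)) * (π/2) := by positivity
    nlinarith [mul_le_mul_of_nonneg_left hbB ha0, mul_le_mul_of_nonneg_right haA hB0]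
  · filter_upwards [hev0] with y hy
    have hy0 := hy.1; have hy1 := hy.2
    have ha0 : 0 ≤ Kell (1-y) := le_trans (by positivity) (Kell_ge (by linarith) (by linarith))
    have hb0 : Eell y - Kell y ≤ 0 := EsubK_nonpos hy0.le hy1
    exact mul_nonpos_iff.2 (Or.inl ⟨ha0, hb0⟩)

/-! Legendre relation -/

noncomputable def Kd (x : ℝ) : ℝ := (Eell x - (1-x) * Kell x) / (2*x*(1-x))
noncomputable def Ed (x : ℝ) : ℝ := (Eell x - Kell x) / (2*x)

lemma hasDerivAt_Kell' {x : ℝ} (hx : x ∈ Ioo (0:ℝ) 1) : HasDerivAt Kell (Kd x) x := by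
  have h := hasDerivAt_Kell hx
  rwa [integral_kd_eq hx] at h

lemma hasDerivAt_Eell' {x : ℝ} (hx : x ∈ Ioo (0:ℝ) 1) : HasDerivAt Eell (Ed x) x := by
  have h := hasDerivAt_Eell hx
  rwa [integral_ed_eq hx] at h

lemma mem_Ioo_sub {x : ℝ} (hx : x ∈ Ioo (0:ℝ) 1) : 1 - x ∈ Ioo (0:ℝ) 1 :=
  ⟨by linarith [hx.2], by linarith [hx.1]⟩

lemma hasDerivAt_Kell1 {x : ℝ} (hx : x ∈ Ioo (0:ℝ) 1) :
    HasDerivAt (fun y => Kell (1-y)) (-(Kd (1-x))) x := by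
  have hs : HasDerivAt (fun y : ℝ => 1 - y) (-1) x := (hasDerivAt_id x).const_sub 1
  have h := (hasDerivAt_Kell' (mem_Ioo_sub hx)).comp x hs
  simpa [Function.comp_def] using h

lemma hasDerivAt_Eell1 {x : ℝ} (hx : x ∈ Ioo (0:ℝ) 1) :
    HasDerivAt (fun y => Eell (1-y)) (-(Ed (1-x))) x := by
  have hs : HasDerivAt (fun y : ℝ => 1 - y) (-1) x := (hasDerivAt_id x).const_sub 1
  have h := (hasDerivAt_Eell' (mem_Ioo_sub hx)).comp x hs
  simpa [Function.comp_def] using h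

noncomputable def Lg (x : ℝ) : ℝ :=
  Eell x * Kell (1-x) + Eell (1-x) * Kell x - Kell x * Kell (1-x)

lemma hasDerivAt_Lg {x : ℝ} (hx : x ∈ Ioo (0:ℝ) 1) : HasDerivAt Lg 0 x := by
  obtain ⟨hx0, hx1⟩ := hx
  have h := (((hasDerivAt_Eell' ⟨hx0, hx1⟩).mul (hasDerivAt_Kell1 ⟨hx0, hx1⟩)).add
    ((hasDerivAt_Eell1 ⟨hx0, hx1⟩).mul (hasDerivAt_Kell' ⟨hx0, hx1⟩))).sub
    ((hasDerivAt_Kell' ⟨hx0, hx1⟩).mul (hasDerivAt_Kell1 ⟨hx0, hx1⟩))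
  have hLg : Lg = fun y => Eell y * Kell (1-y) + Eell (1-y) * Kell y
      - Kell y * Kell (1-y) := rfl
  rw [hLg]
  refine h.congr_deriv ?_; symm
  rw [Kd, Kd, Ed, Ed]
  have hx0' : x ≠ 0 := ne_of_gt hx0
  have hx1' : (1:ℝ) - x ≠ 0 := by intro h'; rw [sub_eq_zero] at h'; linarith
  rw [sub_sub_cancel]
  field_simp
  ring

lemma Lg_const {x : ℝ} (hx : x ∈ Ioo (0:ℝ) 1) : Lg x = π/2 := by
  have hconst : ∀ y ∈ Ioo (0:ℝ) 1, ∀ z ∈ Ioo (0:ℝ) 1, Lg y = Lg z := by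
    intro y hy z hz
    apply (convex_Ioo (0:ℝ) 1).is_const_of_fderivWithin_eq_zero (𝕜 := ℝ)
      (fun w hw => ((hasDerivAt_Lg hw).differentiableAt).differentiableWithinAt) _ hy hz
    intro w hw
    rw [fderivWithin_of_isOpen isOpen_Ioo hw]
    have := (hasDerivAt_Lg hw).hasFDerivAt.fderiv
    rw [this]
    ext v
    simp
  have htL : Tendsto Lg (𝓝[>] (0:ℝ)) (𝓝 (π/2)) := by
    have heq : Lg = fun y => Kell (1-y) * (Eell y - Kell y) + Eell (1-y) * Kell y := by
      funext y; rw [Lg]; ring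
    rw [heq]
    have := tendsto_KEK.add (tendsto_Eell1.mul tendsto_Kell0)
    simpa using this
  have htC : Tendsto Lg (𝓝[>] (0:ℝ)) (𝓝 (Lg x)) := by
    apply Tendsto.congr' _ tendsto_const_nhds
    filter_upwards [hev0] with y hy
    exact (hconst x hx y hy)
  exact tendsto_nhds_unique htC htL

/-- For `x ∈ (0,1)`,
`(d/dx)(K(1−x)/K(x)) = −(π/4)/(x(1−x)K(x)²)`. -/
theorem deriv_K_ratio :
    ∀ x ∈ Set.Ioo (0 : ℝ) 1,
      HasDerivAt (fun y => Kell (1 - y) / Kell y)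
        (-(π / 4) / (x * (1 - x) * (Kell x) ^ 2)) x := by
  intro x hx
  obtain ⟨hx0, hx1⟩ := hx
  have hKpos := Kell_pos hx0.le hx1
  have h := (hasDerivAt_Kell1 ⟨hx0, hx1⟩).div (hasDerivAt_Kell' ⟨hx0, hx1⟩) hKpos.ne'
  refine h.congr_deriv ?_; symm
  have hL := Lg_const ⟨hx0, hx1⟩
  rw [Lg] at hL
  rw [Kd, Kd]
  have hx0' : x ≠ 0 := ne_of_gt hx0
  have hx1' : (1:ℝ) - x ≠ 0 := by intro h'; rw [sub_eq_zero] at h'; linarith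
  rw [sub_sub_cancel]
  field_simp
  linear_combination 4 * hL


end Stmt17
end
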